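/- arXiv:2203.03028 — 5 statements merged into one kernel-verified Lean document; each statement's English description precedes it below -/
import Mathlib

section
/- Let T > 0, let σ : [0,T] → (0,∞) and q_S, γ_S : [0,T] → ℝ be continuous, and let r_G ≥ 0. Let G : ℝ × ℝ × [0,T] → ℝ satisfy |G(v₁;x,t) − G(v₂;x,t)| ≤ L_G |v₁ − v₂| and |G(0;x,t)| ≤ C₀ e^{|x|} for all v₁, v₂ ∈ ℝ, x ∈ ℝ, t ∈ [0,T], with constants L_G, C₀ ≥ 0. Let κ ≥ 1, K ≥ 1, and define V(x,t) = K e^{λt} (e^{κx} + e^{−κx}). If λ ≥ Λ, where Λ = (1/2)κ²‖σ‖²_{L^∞(0,T)} + κ(‖q_S − γ_S‖_{L^∞(0,T)} + (1/2)‖σ‖²_{L^∞(0,T)}) + C₀/K + L_G, then ∂V/∂t(x,t) − (1/2)σ(t)² ∂²V/∂x²(x,t) − (q_S(t) − γ_S(t) − (1/2)σ(t)²) ∂V/∂x(x,t) + r_G V(x,t) − G(V(x,t); x, t) ≥ 0 for all (x,t) ∈ ℝ × [0,T]; that is, V is a (classical) supersolution of the semilinear Black–Scholes equation ∂v/∂t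 − 𝒜(t)v + r_G v = G(v(x,t);x,t). -/
set_option maxHeartbeats 1000000


open Real

/-- `V(x,t) = K e^{λt}(e^{κx} + e^{−κx})` with `λ ≥ Λ` is a classical supersolution
of the semilinear Black–Scholes equation `∂v/∂t − 𝒜(t)v + r_G v = G(v;x,t)`. -/
theorem stmt_6 (T : ℝ) (hT : 0 < T) (sigma qS gammaS : ℝ → ℝ)
    (hsigmac : ContinuousOn sigma (Set.Icc 0 T))
    (hsigmapos : ∀ t ∈ Set.Icc (0:ℝ) T, 0 < sigma t)
    (hqc : ContinuousOn qS (Set.Icc 0 T)) (hgc : ContinuousOn gammaS (Set.Icc 0 T))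
    (rG : ℝ) (hrG : 0 ≤ rG)
    (G : ℝ → ℝ → ℝ → ℝ) (LG C0 : ℝ) (hLG : 0 ≤ LG) (hC0 : 0 ≤ C0)
    (hGlip : ∀ v₁ v₂ x : ℝ, ∀ t ∈ Set.Icc (0:ℝ) T,
      |G v₁ x t - G v₂ x t| ≤ LG * |v₁ - v₂|)
    (hG0 : ∀ x : ℝ, ∀ t ∈ Set.Icc (0:ℝ) T, |G 0 x t| ≤ C0 * Real.exp |x|)
    (kappa K lam Msigma Mq : ℝ) (hkappa : 1 ≤ kappa) (hK : 1 ≤ K)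
    -- `Msigma = ‖σ‖_{L^∞(0,T)}`, `Mq = ‖q_S − γ_S‖_{L^∞(0,T)}`
    (hMsigma : IsGreatest ((fun t => |sigma t|) '' Set.Icc 0 T) Msigma)
    (hMq : IsGreatest ((fun t => |qS t - gammaS t|) '' Set.Icc 0 T) Mq)
    (hlam : lam ≥ (1/2) * kappa ^ 2 * Msigma ^ 2
        + kappa * (Mq + (1/2) * Msigma ^ 2) + C0 / K + LG)
    (V : ℝ → ℝ → ℝ)
    (hV : ∀ x t : ℝ, V x t = K * Real.exp (lam * t)
        * (Real.exp (kappa * x) + Real.exp (-(kappa * x)))) :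
    ∀ x : ℝ, ∀ t ∈ Set.Icc (0:ℝ) T,
      deriv (fun s => V x s) t
        - (1/2) * (sigma t) ^ 2 * deriv (fun y => deriv (fun z => V z t) y) x
        - (qS t - gammaS t - (1/2) * (sigma t) ^ 2) * deriv (fun y => V y t) x
        + rG * V x t - G (V x t) x t ≥ 0 := by
  intro x t ht
  obtain ⟨ht0, htT⟩ := ht
  have hKpos : (0:ℝ) < K := lt_of_lt_of_le one_pos hK
  have hkpos : (0:ℝ) < kappa := lt_of_lt_of_le one_pos hkappa
  -- abbreviations
  have hE1 : (0:ℝ) < Real.exp (kappa * x) := Real.exp_pos _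
  have hE2 : (0:ℝ) < Real.exp (-(kappa * x)) := Real.exp_pos _
  have hPpos : (0:ℝ) < Real.exp (lam * t) := Real.exp_pos _
  -- bounds from sup norms
  have hMs0 : 0 ≤ Msigma := by
    obtain ⟨s, _, hs⟩ := hMsigma.1
    exact hs ▸ abs_nonneg _
  have hMq0 : 0 ≤ Mq := by
    obtain ⟨s, _, hs⟩ := hMq.1
    exact hs ▸ abs_nonneg _
  have hσb : |sigma t| ≤ Msigma := hMsigma.2 ⟨t, ⟨ht0, htT⟩, rfl⟩
  have hqb : |qS t - gammaS t| ≤ Mq := hMq.2 ⟨t, ⟨ht0, htT⟩, rfl⟩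
  have hσ2 : (sigma t) ^ 2 ≤ Msigma ^ 2 := by
    have := pow_le_pow_left₀ (abs_nonneg (sigma t)) hσb 2
    simpa [sq_abs] using this
  have hlam0 : 0 ≤ lam := by
    have h1 : 0 ≤ C0 / K := div_nonneg hC0 (le_of_lt hKpos)
    nlinarith [sq_nonneg Msigma, sq_nonneg kappa, mul_nonneg hMq0 (le_of_lt hkpos)]
  have hP1 : 1 ≤ Real.exp (lam * t) := by
    rw [show (1:ℝ) = Real.exp 0 by simp]
    exact Real.exp_le_exp.mpr (mul_nonneg hlam0 ht0)
  -- time derivative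
  have hdt : deriv (fun s => V x s) t
      = lam * (K * Real.exp (lam * t) * (Real.exp (kappa * x) + Real.exp (-(kappa * x)))) := by
    have heq : (fun s => V x s)
        = fun s => K * Real.exp (lam * s) * (Real.exp (kappa * x) + Real.exp (-(kappa * x))) :=
      funext fun s => hV x s
    rw [heq]
    have h : HasDerivAt (fun s => K * Real.exp (lam * s)
        * (Real.exp (kappa * x) + Real.exp (-(kappa * x))))
        (K * (Real.exp (lam * t) * (lam * 1)) * (Real.exp (kappa * x) + Real.exp (-(kappa * x)))) t :=
      ((((hasDerivAt_id t).const_mul lam).exp).const_mul K).mul_const _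
    rw [h.deriv]; ring
  -- first space derivative (as a function)
  have hdx : ∀ y : ℝ, deriv (fun z => V z t) y
      = K * Real.exp (lam * t) * (kappa * (Real.exp (kappa * y) - Real.exp (-(kappa * y)))) := by
    intro y
    have heq : (fun z => V z t)
        = fun z => K * Real.exp (lam * t) * (Real.exp (kappa * z) + Real.exp (-(kappa * z))) :=
      funext fun z => hV z t
    rw [heq]
    have h1 : HasDerivAt (fun z => Real.exp (kappa * z)) (Real.exp (kappa * y) * (kappa * 1)) y :=
      ((hasDerivAt_id y).const_mul kappa).exp
    have h2 : HasDerivAt (fun z => Real.exp (-(kappa * z)))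
        (Real.exp (-(kappa * y)) * (-(kappa * 1))) y :=
      (((hasDerivAt_id y).const_mul kappa).neg).exp
    have h := (h1.add h2).const_mul (K * Real.exp (lam * t))
    simp only [Pi.add_apply] at h
    rw [h.deriv]; ring
  -- second space derivative
  have hdxx : deriv (fun y => deriv (fun z => V z t) y) x
      = kappa ^ 2 * (K * Real.exp (lam * t) * (Real.exp (kappa * x) + Real.exp (-(kappa * x)))) := by
    have heq : (fun y => deriv (fun z => V z t) y)
        = fun y => K * Real.exp (lam * t)
          * (kappa * (Real.exp (kappa * y) - Real.exp (-(kappa * y)))) := funext hdx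
    rw [heq]
    have h1 : HasDerivAt (fun y => Real.exp (kappa * y)) (Real.exp (kappa * x) * (kappa * 1)) x :=
      ((hasDerivAt_id x).const_mul kappa).exp
    have h2 : HasDerivAt (fun y => Real.exp (-(kappa * y)))
        (Real.exp (-(kappa * x)) * (-(kappa * 1))) x :=
      (((hasDerivAt_id x).const_mul kappa).neg).exp
    have h := ((h1.sub h2).const_mul kappa).const_mul (K * Real.exp (lam * t))
    simp only [Pi.sub_apply] at h
    rw [h.deriv]; ring
  rw [hdt, hdxx, hdx x, hV x t]
  set E1 := Real.exp (kappa * x) with hE1d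
  set E2 := Real.exp (-(kappa * x)) with hE2d
  set P := Real.exp (lam * t) with hPd
  set W := K * P * (E1 + E2) with hWd
  have hWpos : 0 < W := by positivity
  -- bound on exp |x|
  have hexpabs : Real.exp |x| ≤ E1 + E2 := by
    rcases le_or_gt 0 x with hx | hx
    · have h1 : |x| ≤ kappa * x := by
        rw [abs_of_nonneg hx]; nlinarith
      calc Real.exp |x| ≤ E1 := Real.exp_le_exp.mpr h1
        _ ≤ E1 + E2 := by linarith
    · have h1 : |x| ≤ -(kappa * x) := by
        rw [abs_of_neg hx]; nlinarith
      calc Real.exp |x| ≤ E2 := Real.exp_le_exp.mpr h1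
        _ ≤ E1 + E2 := by linarith
  -- bound on G
  have hGb : G W x t ≤ LG * W + (C0 / K) * W := by
    have hlip := hGlip W 0 x t ⟨ht0, htT⟩
    have h0 := hG0 x t ⟨ht0, htT⟩
    have h1 : G W x t ≤ LG * W + C0 * Real.exp |x| := by
      have : G W x t - G 0 x t ≤ LG * |W - 0| := le_trans (le_abs_self _) hlip
      have h2 : G 0 x t ≤ C0 * Real.exp |x| := le_trans (le_abs_self _) h0
      rw [sub_zero, abs_of_pos hWpos] at this
      linarith
    have h3 : C0 * Real.exp |x| ≤ (C0 / K) * W := by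
      have h4 : C0 * Real.exp |x| ≤ C0 * (E1 + E2) :=
        mul_le_mul_of_nonneg_left hexpabs hC0
      have h5 : C0 * (E1 + E2) ≤ C0 * (P * (E1 + E2)) :=
        mul_le_mul_of_nonneg_left
          (le_mul_of_one_le_left (by positivity) hP1) hC0
      have h6 : (C0 / K) * W = C0 * (P * (E1 + E2)) := by
        rw [hWd]; field_simp
      linarith
    linarith
  -- bound on drift term
  have hdrift : (qS t - gammaS t - (1/2) * (sigma t) ^ 2)
      * (K * P * (kappa * (E1 - E2))) ≤ kappa * (Mq + (1/2) * Msigma ^ 2) * W := by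
    have hc : |qS t - gammaS t - (1/2) * (sigma t) ^ 2| ≤ Mq + (1/2) * Msigma ^ 2 := by
      have h2 : |(1/2) * (sigma t) ^ 2| = (1/2) * (sigma t) ^ 2 :=
        abs_of_nonneg (by positivity)
      calc |qS t - gammaS t - (1/2) * (sigma t) ^ 2|
          ≤ |qS t - gammaS t| + |(1/2) * (sigma t) ^ 2| := abs_sub _ _
        _ ≤ Mq + (1/2) * Msigma ^ 2 := by rw [h2]; linarith
    have hd : |E1 - E2| ≤ E1 + E2 := by
      rw [abs_sub_le_iff]; constructor <;> linarith
    have key : (qS t - gammaS t - (1/2) * (sigma t) ^ 2) * (E1 - E2)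
        ≤ (Mq + (1/2) * Msigma ^ 2) * (E1 + E2) := by
      calc (qS t - gammaS t - (1/2) * (sigma t) ^ 2) * (E1 - E2)
          ≤ |(qS t - gammaS t - (1/2) * (sigma t) ^ 2) * (E1 - E2)| := le_abs_self _
        _ = |qS t - gammaS t - (1/2) * (sigma t) ^ 2| * |E1 - E2| := abs_mul _ _
        _ ≤ (Mq + (1/2) * Msigma ^ 2) * (E1 + E2) :=
            mul_le_mul hc hd (abs_nonneg _) (by nlinarith [sq_nonneg Msigma])
    have hpos : (0:ℝ) ≤ K * P * kappa := by positivity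
    have := mul_le_mul_of_nonneg_left key hpos
    calc (qS t - gammaS t - (1/2) * (sigma t) ^ 2) * (K * P * (kappa * (E1 - E2)))
        = (K * P * kappa) * ((qS t - gammaS t - (1/2) * (sigma t) ^ 2) * (E1 - E2)) := by ring
      _ ≤ (K * P * kappa) * ((Mq + (1/2) * Msigma ^ 2) * (E1 + E2)) := this
      _ = kappa * (Mq + (1/2) * Msigma ^ 2) * W := by rw [hWd]; ring
  -- bound on diffusion term
  have hdiff : (1/2) * (sigma t) ^ 2 * (kappa ^ 2 * W)
      ≤ (1/2) * Msigma ^ 2 * kappa ^ 2 * W := by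
    nlinarith [mul_nonneg (sq_nonneg kappa) (le_of_lt hWpos)]
  have hlamW : ((1/2) * kappa ^ 2 * Msigma ^ 2
      + kappa * (Mq + (1/2) * Msigma ^ 2) + C0 / K + LG) * W ≤ lam * W :=
    mul_le_mul_of_nonneg_right hlam (le_of_lt hWpos)
  have hrGW : 0 ≤ rG * W := mul_nonneg hrG (le_of_lt hWpos)
  have hWeq : K * P * (E1 + E2) = W := hWd.symm
  nlinarith [hGb, hdrift, hdiff, hlamW, hrGW, hWpos]
end

section
/- Let T > 0, let σ : [0,T] → (0,∞) and q_S, γ_S : [0,T] → ℝ be continuous, and let r_G ≥ 0. Let G : ℝ × ℝ × [0,T] → ℝ satisfy |G(v₁;x,t) − G(v₂;x,t)| ≤ L_G |v₁ − v₂| and |G(0;x,t)| ≤ C₀ e^{|x|} for all v₁, v₂ ∈ ℝ, x ∈ ℝ, t ∈ [0,T], with constants L_G, C₀ ≥ 0. Let κ ≥ 1, K ≥ 1, and define V(x,t) = K e^{λt} (e^{κx} + e^{−κx}). If λ ≥ Λ, where Λ = (1/2)κ²‖σ‖²_{L^∞(0,T)} + κ(‖q_S − γ_S‖_{L^∞(0,T)}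 + (1/2)‖σ‖²_{L^∞(0,T)}) + C₀/K + L_G, then ∂(−V)/∂t(x,t) − (1/2)σ(t)² ∂²(−V)/∂x²(x,t) − (q_S(t) − γ_S(t) − (1/2)σ(t)²) ∂(−V)/∂x(x,t) + r_G (−V(x,t)) − G(−V(x,t); x, t) ≤ 0 for all (x,t) ∈ ℝ × [0,T]; that is, −V is a (classical) subsolution of the semilinear Black–Scholes equation ∂v/∂t − 𝒜(t)v + r_G v = G(v(x,t);x,t). -/
open Real

private lemma expDeriv7 (a t : ℝ) :
    HasDerivAt (fun s => Real.exp (a * s)) (a * Real.exp (a * t)) t := by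
  have h : HasDerivAt (fun s : ℝ => a * s) a t := by
    simpa using (hasDerivAt_id t).const_mul a
  simpa [mul_comm] using h.exp

set_option maxHeartbeats 1000000 in
/-- `−V(x,t)`, with `V(x,t) = K e^{λt}(e^{κx} + e^{−κx})` and `λ ≥ Λ`, is a classical subsolution
of the semilinear Black–Scholes equation `∂v/∂t − 𝒜(t)v + r_G v = G(v;x,t)`. -/
theorem stmt_7 (T : ℝ) (hT : 0 < T) (sigma qS gammaS : ℝ → ℝ)
    (hsigmac : ContinuousOn sigma (Set.Icc 0 T))
    (hsigmapos : ∀ t ∈ Set.Icc (0:ℝ) T, 0 < sigma t)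
    (hqc : ContinuousOn qS (Set.Icc 0 T)) (hgc : ContinuousOn gammaS (Set.Icc 0 T))
    (rG : ℝ) (hrG : 0 ≤ rG)
    (G : ℝ → ℝ → ℝ → ℝ) (LG C0 : ℝ) (hLG : 0 ≤ LG) (hC0 : 0 ≤ C0)
    (hGlip : ∀ v₁ v₂ x : ℝ, ∀ t ∈ Set.Icc (0:ℝ) T,
      |G v₁ x t - G v₂ x t| ≤ LG * |v₁ - v₂|)
    (hG0 : ∀ x : ℝ, ∀ t ∈ Set.Icc (0:ℝ) T, |G 0 x t| ≤ C0 * Real.exp |x|)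
    (kappa K lam Msigma Mq : ℝ) (hkappa : 1 ≤ kappa) (hK : 1 ≤ K)
    -- `Msigma = ‖σ‖_{L^∞(0,T)}`, `Mq = ‖q_S − γ_S‖_{L^∞(0,T)}`
    (hMsigma : IsGreatest ((fun t => |sigma t|) '' Set.Icc 0 T) Msigma)
    (hMq : IsGreatest ((fun t => |qS t - gammaS t|) '' Set.Icc 0 T) Mq)
    (hlam : lam ≥ (1/2) * kappa ^ 2 * Msigma ^ 2
        + kappa * (Mq + (1/2) * Msigma ^ 2) + C0 / K + LG)
    (V : ℝ → ℝ → ℝ)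
    (hV : ∀ x t : ℝ, V x t = K * Real.exp (lam * t)
        * (Real.exp (kappa * x) + Real.exp (-(kappa * x)))) :
    ∀ x : ℝ, ∀ t ∈ Set.Icc (0:ℝ) T,
      deriv (fun s => -V x s) t
        - (1/2) * (sigma t) ^ 2 * deriv (fun y => deriv (fun z => -V z t) y) x
        - (qS t - gammaS t - (1/2) * (sigma t) ^ 2) * deriv (fun y => -V y t) x
        + rG * (-V x t) - G (-V x t) x t ≤ 0 := by
  intro x t ht
  set E : ℝ := Real.exp (kappa * x) + Real.exp (-(kappa * x)) with hE
  set F : ℝ := Real.exp (kappa * x) - Real.exp (-(kappa * x)) with hF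
  set W : ℝ := K * Real.exp (lam * t) * E with hW
  have hK0 : (0:ℝ) < K := lt_of_lt_of_le one_pos hK
  have hEpos : 0 < E := by positivity
  have hWpos : 0 < W := by positivity
  -- nonnegativity of Msigma, Mq, lam
  have hMs0 : 0 ≤ Msigma := by
    obtain ⟨s, -, hs⟩ := hMsigma.1
    rw [← hs]; exact abs_nonneg _
  have hMq0 : 0 ≤ Mq := by
    obtain ⟨s, -, hs⟩ := hMq.1
    rw [← hs]; exact abs_nonneg _
  have hlam0 : 0 ≤ lam := by
    have : 0 ≤ C0 / K := div_nonneg hC0 hK0.le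
    nlinarith [sq_nonneg Msigma, sq_nonneg kappa]
  -- time derivative
  have hdt : deriv (fun s => -V x s) t = -(lam * W) := by
    have heq : (fun s => -V x s) = fun s => -(K * E * Real.exp (lam * s)) := by
      funext s; rw [hV]; ring
    rw [heq]
    have h := ((expDeriv7 lam t).const_mul (K * E)).neg
    rw [HasDerivAt.deriv (f := fun s => -(K * E * Real.exp (lam * s))) h]; rw [hW]; ring
  -- first space derivative (at any point)
  have hdx : ∀ y : ℝ, HasDerivAt (fun z => -V z t)
      (-(K * Real.exp (lam * t) * (kappa * Real.exp (kappa * y)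
        - kappa * Real.exp (-(kappa * y))))) y := by
    intro y
    have heq : (fun z => -V z t) = fun z =>
        -(K * Real.exp (lam * t) * (Real.exp (kappa * z) + Real.exp (-(kappa * z)))) := by
      funext z; rw [hV]
    rw [heq]
    have e1 := expDeriv7 kappa y
    have e2 : HasDerivAt (fun z => Real.exp (-(kappa * z)))
        (-kappa * Real.exp (-(kappa * y))) y := by
      have := expDeriv7 (-kappa) y
      simpa [neg_mul] using this
    have h := ((e1.add e2).const_mul (K * Real.exp (lam * t))).neg
    refine h.congr_deriv ?_; ring
  have hdx1 : deriv (fun y => -V y t) x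
      = -(K * Real.exp (lam * t) * (kappa * F)) := by
    rw [(hdx x).deriv, hF]; ring
  -- second space derivative
  have hdx2 : deriv (fun y => deriv (fun z => -V z t) y) x
      = -(kappa ^ 2 * W) := by
    have heq : (fun y => deriv (fun z => -V z t) y) = fun y =>
        -(K * Real.exp (lam * t) * (kappa * Real.exp (kappa * y)
          - kappa * Real.exp (-(kappa * y)))) := by
      funext y; exact (hdx y).deriv
    rw [heq]
    have e1 := (expDeriv7 kappa x).const_mul kappa
    have e2 : HasDerivAt (fun z => kappa * Real.exp (-(kappa * z)))
        (kappa * (-kappa * Real.exp (-(kappa * x)))) x := by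
      have := (expDeriv7 (-kappa) x).const_mul kappa
      simpa [neg_mul] using this
    have h := ((e1.sub e2).const_mul (K * Real.exp (lam * t))).neg
    rw [HasDerivAt.deriv (f := fun y => -(K * Real.exp (lam * t) * (kappa * Real.exp (kappa * y)
      - kappa * Real.exp (-(kappa * y))))) h, hW, hE]; ring
  have hVW : V x t = W := by rw [hV, hW, hE]
  rw [hdt, hdx1, hdx2, hVW]
  -- bounds
  have hsb : |sigma t| ≤ Msigma := hMsigma.2 ⟨t, ht, rfl⟩
  have hs2 : (sigma t) ^ 2 ≤ Msigma ^ 2 := by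
    have := sq_abs (sigma t)
    nlinarith [abs_nonneg (sigma t)]
  have hqb : |qS t - gammaS t| ≤ Mq := hMq.2 ⟨t, ht, rfl⟩
  have hFE : |F| ≤ E := by
    rw [hF, hE]
    have h1 : 0 < Real.exp (kappa * x) := Real.exp_pos _
    have h2 : 0 < Real.exp (-(kappa * x)) := Real.exp_pos _
    rw [abs_le]; constructor <;> nlinarith
  -- G bound
  have hexp1 : 1 ≤ Real.exp (lam * t) := by
    rw [Real.one_le_exp_iff]
    exact mul_nonneg hlam0 ht.1
  have hexE : Real.exp |x| ≤ E := by
    have h1 : |x| ≤ kappa * |x| := le_mul_of_one_le_left (abs_nonneg x) hkappa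
    have h2 : Real.exp |x| ≤ Real.exp (kappa * |x|) := Real.exp_le_exp.2 h1
    rcases abs_cases x with ⟨h, -⟩ | ⟨h, -⟩
    · rw [hE, h]; rw [h] at h2
      linarith [Real.exp_pos (-(kappa * x))]
    · rw [hE, h]; rw [h] at h2
      rw [mul_neg] at h2
      linarith [Real.exp_pos (kappa * x)]
  have hGb : -G (-W) x t ≤ LG * W + (C0 / K) * W := by
    have h1 := hGlip (-W) 0 x t ht
    have h2 := hG0 x t ht
    have h3 : |(-W) - 0| = W := by rw [sub_zero, abs_neg, abs_of_pos hWpos]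
    rw [h3] at h1
    have h4 : |G (-W) x t| ≤ LG * W + C0 * Real.exp |x| := by
      calc |G (-W) x t| ≤ |G (-W) x t - G 0 x t| + |G 0 x t| := by
            have := abs_sub_abs_le_abs_sub (G (-W) x t) (G 0 x t)
            have := abs_add_le (G (-W) x t - G 0 x t) (G 0 x t)
            simp only [sub_add_cancel] at this
            exact this
        _ ≤ LG * W + C0 * Real.exp |x| := add_le_add h1 h2
    have h5 : C0 * Real.exp |x| ≤ (C0 / K) * W := by
      rw [hW]
      have : C0 / K * (K * Real.exp (lam * t) * E) = C0 * (Real.exp (lam * t) * E) := by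
        field_simp
      rw [this]
      have hEx : Real.exp |x| ≤ Real.exp (lam * t) * E := by
        nlinarith [Real.exp_pos |x|]
      nlinarith
    have := neg_abs_le (G (-W) x t)
    linarith
  -- main inequality
  have hT2 : (1/2) * (sigma t) ^ 2 * (kappa ^ 2 * W) ≤ (1/2) * Msigma ^ 2 * (kappa ^ 2 * W) := by
    have : 0 ≤ kappa ^ 2 * W := by positivity
    nlinarith
  have hT3 : (qS t - gammaS t - (1/2) * (sigma t) ^ 2)
      * (K * Real.exp (lam * t) * (kappa * F))
      ≤ (Mq + (1/2) * Msigma ^ 2) * (kappa * W) := by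
    have hA : |qS t - gammaS t - (1/2) * (sigma t) ^ 2| ≤ Mq + (1/2) * Msigma ^ 2 := by
      have h1 : |qS t - gammaS t - (1/2) * (sigma t) ^ 2|
          ≤ |qS t - gammaS t| + |(1/2) * (sigma t) ^ 2| := abs_sub _ _
      have h2 : |(1/2) * (sigma t) ^ 2| = (1/2) * (sigma t) ^ 2 := by
        rw [abs_of_nonneg]; positivity
      linarith
    have key : (qS t - gammaS t - (1/2) * (sigma t) ^ 2)
        * (K * Real.exp (lam * t) * (kappa * F))
        ≤ |qS t - gammaS t - (1/2) * (sigma t) ^ 2|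
          * (K * Real.exp (lam * t) * (kappa * |F|)) := by
      have h0 : 0 ≤ K * Real.exp (lam * t) * kappa := by positivity
      calc (qS t - gammaS t - (1/2) * (sigma t) ^ 2)
            * (K * Real.exp (lam * t) * (kappa * F))
          ≤ |(qS t - gammaS t - (1/2) * (sigma t) ^ 2)
            * (K * Real.exp (lam * t) * (kappa * F))| := le_abs_self _
        _ = |qS t - gammaS t - (1/2) * (sigma t) ^ 2|
            * (K * Real.exp (lam * t) * (kappa * |F|)) := by
            rw [abs_mul, abs_mul, abs_mul, abs_mul,
              abs_of_nonneg hK0.le, abs_of_nonneg (Real.exp_pos _).le,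
              abs_of_nonneg (by positivity : (0:ℝ) ≤ kappa)]
    have h6 : K * Real.exp (lam * t) * (kappa * |F|) ≤ kappa * W := by
      rw [hW]
      have : 0 ≤ K * Real.exp (lam * t) * kappa := by positivity
      nlinarith
    have h7 : 0 ≤ |qS t - gammaS t - (1/2) * (sigma t) ^ 2| := abs_nonneg _
    have h8 : 0 ≤ kappa * W := by positivity
    calc _ ≤ |qS t - gammaS t - (1/2) * (sigma t) ^ 2|
          * (K * Real.exp (lam * t) * (kappa * |F|)) := key
      _ ≤ |qS t - gammaS t - (1/2) * (sigma t) ^ 2| * (kappa * W) :=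
          mul_le_mul_of_nonneg_left h6 h7
      _ ≤ (Mq + (1/2) * Msigma ^ 2) * (kappa * W) := mul_le_mul_of_nonneg_right hA h8
    done
  have hT4 : rG * (-W) ≤ 0 := by nlinarith
  have hfinal : (-(lam * W)) + (1/2) * Msigma ^ 2 * (kappa ^ 2 * W)
      + (Mq + (1/2) * Msigma ^ 2) * (kappa * W) + LG * W + (C0 / K) * W ≤ 0 := by
    have : (-(lam * W)) + (1/2) * Msigma ^ 2 * (kappa ^ 2 * W)
        + (Mq + (1/2) * Msigma ^ 2) * (kappa * W) + LG * W + (C0 / K) * W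
        = (-(lam) + (1/2) * kappa ^ 2 * Msigma ^ 2
          + kappa * (Mq + (1/2) * Msigma ^ 2) + C0 / K + LG) * W := by ring
    rw [this]
    apply mul_nonpos_of_nonpos_of_nonneg
    · linarith
    · exact hWpos.le
  linarith [hT2, hT3, hT4, hGb, hfinal]
end

section
/- (Weak maximum principle with exponential growth.) Let T > 0, let σ : [0,T] → (0,∞) and q_S, γ_S : [0,T] → ℝ be continuous, and let r_G ≥ 0. Let w : ℝ × [0,T] → ℝ be continuous, with ∂w/∂t, ∂w/∂x, ∂²w/∂x² existing and continuous on ℝ × (0,T], and suppose there exist constants C, κ ≥ 0 with |w(x,t)| ≤ C e^{κ|x|} for all (x,t) ∈ ℝ × [0,T]. If ∂w/∂t − (1/2)σ(t)² ∂²w/∂x² − (q_S(t) − γ_S(t) − (1/2)σ(t)²) ∂w/∂x + r_G w ≥ 0 on ℝ × (0,T] and w(x,0) ≥ 0 for all x ∈ ℝ, then w(x,t) ≥ 0 for all (x,t) ∈ ℝ × [0,T]. -/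
open Real Set Filter Topology

/-- At a minimum over `Ioc 0 T` attained at `t₀ ∈ Ioc 0 T`, a derivative within
`Ioc 0 T` is nonpositive. -/
lemma aux_min_deriv_nonpos {f : ℝ → ℝ} {d T t₀ : ℝ}
    (h : HasDerivWithinAt f d (Set.Ioc 0 T) t₀) (ht0 : 0 < t₀) (htT : t₀ ≤ T)
    (hmin : ∀ s ∈ Set.Ioo (0:ℝ) t₀, f t₀ ≤ f s) : d ≤ 0 := by
  have hsub : Set.Ioo (0:ℝ) t₀ ⊆ Set.Ioc 0 T := fun s hs => ⟨hs.1, hs.2.le.trans htT⟩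
  have h' := (h.mono hsub)
  rw [hasDerivWithinAt_iff_tendsto_slope] at h'
  have hne : t₀ ∉ Set.Ioo (0:ℝ) t₀ := fun hs => lt_irrefl _ hs.2
  rw [Set.diff_singleton_eq_self hne] at h'
  haveI : (𝓝[Set.Ioo (0:ℝ) t₀] t₀).NeBot := right_nhdsWithin_Ioo_neBot ht0
  refine le_of_tendsto h' ?_
  filter_upwards [self_mem_nhdsWithin] with s hs
  have hlt : s < t₀ := hs.2
  rw [slope_def_field]
  exact div_nonpos_of_nonneg_of_nonpos (by linarith [hmin s hs]) (by linarith)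

/-- If `f` attains a global minimum at `a`, has derivative `f'` everywhere and `f'` has
derivative `c` at `a`, then `0 ≤ c`. -/
lemma aux_second_deriv_nonneg {f f' : ℝ → ℝ} {a c : ℝ}
    (hf : ∀ x, HasDerivAt f (f' x) x) (hmin : ∀ x, f a ≤ f x)
    (hf'' : HasDerivAt f' c a) : 0 ≤ c := by
  by_contra hc
  push_neg at hc
  have hfa : f' a = 0 := by
    have hlm : IsLocalMin f a := Filter.Eventually.of_forall hmin
    exact hlm.hasDerivAt_eq_zero (hf a)
  have hslope := hasDerivAt_iff_tendsto_slope.1 hf''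
  have hev : ∀ᶠ x in 𝓝[≠] a, slope f' a x < c / 2 := by
    have : Set.Iio (c/2) ∈ 𝓝 c := Iio_mem_nhds (by linarith)
    exact hslope (this)
  rw [eventually_nhdsWithin_iff] at hev
  rcases Metric.eventually_nhds_iff.1 hev with ⟨δ, hδ, hball⟩
  set b := a + δ/2 with hb
  have hab : a < b := by simp [hb]; linarith
  -- f' is negative on (a, b]
  have hneg : ∀ x ∈ Set.Ioo a b, f' x < 0 := by
    intro x hx
    have hxδ : dist x a < δ := by
      rw [Real.dist_eq, abs_of_pos (by linarith [hx.1])]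
      have := hx.2; simp [hb] at this; linarith
    have hxne : x ≠ a := ne_of_gt hx.1
    have := hball hxδ hxne
    rw [slope_def_field, hfa] at this
    have hx0 : 0 < x - a := by linarith [hx.1]
    have : (f' x - 0) / (x - a) < c / 2 := by
      have h2 : (f' x - f' a) / (x - a) < c/2 := by
        have := hball hxδ hxne; rwa [slope_def_field] at this
      rwa [hfa] at h2
    have h3 := (div_lt_iff₀ hx0).mp this
    nlinarith [mul_neg_of_neg_of_pos (show c/2 < 0 by linarith) hx0]
  -- MVT on [a, b]
  obtain ⟨ξ, hξ, hξeq⟩ := exists_hasDerivAt_eq_slope f f' hab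
    (fun x _ => (hf x).continuousAt.continuousWithinAt) (fun x hx => hf x)
  have hfb : (f b - f a) / (b - a) < 0 := hξeq ▸ hneg ξ hξ
  have : f b - f a < 0 := by
    have hba : 0 < b - a := by linarith
    have := (div_lt_iff₀ hba).mp (by simpa using hfb)
    simpa using this
  linarith [hmin b]

set_option maxHeartbeats 2000000 in
/-- Weak maximum principle with exponential growth for the parabolic operator
`∂/∂t − 𝒜(t) + r_G` on `ℝ × [0,T]`: if `w` is continuous on `ℝ × [0,T]`, has
continuous derivatives `∂w/∂t, ∂w/∂x, ∂²w/∂x²` on `ℝ × (0,T]`, grows at most like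
`C e^{κ|x|}`, satisfies `∂w/∂t − (1/2)σ(t)²∂²w/∂x² − (q_S(t) − γ_S(t) − (1/2)σ(t)²)∂w/∂x
+ r_G w ≥ 0` on `ℝ × (0,T]` and `w(·,0) ≥ 0`, then `w ≥ 0` on `ℝ × [0,T]`. -/
theorem stmt_9 (T : ℝ) (hT : 0 < T) (sigma qS gammaS : ℝ → ℝ)
    (hsigmac : ContinuousOn sigma (Set.Icc 0 T))
    (hsigmapos : ∀ t ∈ Set.Icc (0:ℝ) T, 0 < sigma t)
    (hqc : ContinuousOn qS (Set.Icc 0 T)) (hgc : ContinuousOn gammaS (Set.Icc 0 T))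
    (rG : ℝ) (hrG : 0 ≤ rG)
    (w wt wx wxx : ℝ → ℝ → ℝ)
    (hcont : ContinuousOn (fun p : ℝ × ℝ => w p.1 p.2) (Set.univ ×ˢ Set.Icc 0 T))
    (hwt : ∀ x : ℝ, ∀ t ∈ Set.Ioc (0:ℝ) T,
      HasDerivWithinAt (fun s => w x s) (wt x t) (Set.Ioc 0 T) t)
    (hwx : ∀ x : ℝ, ∀ t ∈ Set.Ioc (0:ℝ) T, HasDerivAt (fun y => w y t) (wx x t) x)
    (hwxx : ∀ x : ℝ, ∀ t ∈ Set.Ioc (0:ℝ) T, HasDerivAt (fun y => wx y t) (wxx x t) x)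
    (hwtc : ContinuousOn (fun p : ℝ × ℝ => wt p.1 p.2) (Set.univ ×ˢ Set.Ioc 0 T))
    (hwxc : ContinuousOn (fun p : ℝ × ℝ => wx p.1 p.2) (Set.univ ×ˢ Set.Ioc 0 T))
    (hwxxc : ContinuousOn (fun p : ℝ × ℝ => wxx p.1 p.2) (Set.univ ×ˢ Set.Ioc 0 T))
    (C kappa : ℝ) (hC : 0 ≤ C) (hkappa : 0 ≤ kappa)
    (hgrowth : ∀ x : ℝ, ∀ t ∈ Set.Icc (0:ℝ) T, |w x t| ≤ C * Real.exp (kappa * |x|))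
    (hineq : ∀ x : ℝ, ∀ t ∈ Set.Ioc (0:ℝ) T,
      wt x t - (1/2) * (sigma t) ^ 2 * wxx x t
        - (qS t - gammaS t - (1/2) * (sigma t) ^ 2) * wx x t + rG * w x t ≥ 0)
    (hinit : ∀ x : ℝ, 0 ≤ w x 0) :
    ∀ x : ℝ, ∀ t ∈ Set.Icc (0:ℝ) T, 0 ≤ w x t := by
  -- Notation: κ' = kappa + 1
  set κ' : ℝ := kappa + 1 with hκ'def
  have hκ'pos : 0 < κ' := by positivity
  -- Bound on coefficients
  have hbbc : ContinuousOn (fun t => qS t - gammaS t - (1/2) * (sigma t) ^ 2)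
      (Set.Icc 0 T) := (hqc.sub hgc).sub (continuousOn_const.mul (hsigmac.pow 2))
  have hfc : ContinuousOn
      (fun t => (1/2) * (sigma t) ^ 2 * κ' ^ 2
        + |qS t - gammaS t - (1/2) * (sigma t) ^ 2| * κ') (Set.Icc 0 T) :=
    ((continuousOn_const.mul (hsigmac.pow 2)).mul continuousOn_const).add
      (hbbc.abs.mul continuousOn_const)
  obtain ⟨M, hM⟩ := isCompact_Icc.exists_bound_of_continuousOn hfc
  have hMub : ∀ t ∈ Set.Icc (0:ℝ) T,
      (1/2) * (sigma t) ^ 2 * κ' ^ 2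
        + |qS t - gammaS t - (1/2) * (sigma t) ^ 2| * κ' ≤ M := by
    intro t ht
    have := hM t ht
    rw [Real.norm_eq_abs] at this
    exact (le_abs_self _).trans this
  have hMnonneg : 0 ≤ M := by
    have h0 : (0:ℝ) ∈ Set.Icc (0:ℝ) T := ⟨le_refl _, hT.le⟩
    have := hMub 0 h0
    nlinarith [sq_nonneg (sigma 0), abs_nonneg (qS 0 - gammaS 0 - (1/2) * (sigma 0)^2),
      hκ'pos.le, sq_nonneg κ']
  set α : ℝ := M + 1 with hαdef
  have hαpos : 0 < α := by linarith
  -- positivity of the barrier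
  have hBpos : ∀ x t : ℝ, 0 < Real.exp (α*t) * Real.cosh (κ'*x) :=
    fun x t => mul_pos (Real.exp_pos _) (Real.cosh_pos _)
  -- Key claim
  have key : ∀ ε : ℝ, 0 < ε → ∀ x : ℝ, ∀ t ∈ Set.Icc (0:ℝ) T,
      0 ≤ w x t + ε * (Real.exp (α*t) * Real.cosh (κ'*x)) := by
    intro ε hε
    by_contra hcontra
    push_neg at hcontra
    obtain ⟨xb, tb, htb, hneg⟩ := hcontra
    -- lower bound on v away from a compact set
    have hlow : ∀ x : ℝ, ∀ t ∈ Set.Icc (0:ℝ) T,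
        Real.exp (kappa*|x|) * ((ε/2) * Real.exp |x| - C)
          ≤ w x t + ε * (Real.exp (α*t) * Real.cosh (κ'*x)) := by
      intro x t ht
      have h1 : -(C * Real.exp (kappa*|x|)) ≤ w x t := by
        have := (abs_le.1 (hgrowth x t ht)).1
        linarith
      have hcb : Real.exp (kappa*|x|) * Real.exp |x| / 2 ≤ Real.cosh (κ'*x) := by
        have habs : |κ'*x| = κ'*|x| := by rw [abs_mul, abs_of_pos hκ'pos]
        have h2 : Real.exp (κ'*|x|) / 2 ≤ Real.cosh (κ'*x) := by
          rw [Real.cosh_eq]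
          rcases abs_cases (κ'*x) with ⟨h, _⟩ | ⟨h, _⟩ <;> rw [← habs, h] <;>
            linarith [Real.exp_pos (-(κ'*x)), Real.exp_pos (κ'*x)]
        have h3 : Real.exp (κ'*|x|) = Real.exp (kappa*|x|) * Real.exp |x| := by
          rw [← Real.exp_add, hκ'def]; ring_nf
        rw [h3] at h2; linarith
      have hone : (1:ℝ) ≤ Real.exp (α*t) :=
        Real.one_le_exp (mul_nonneg hαpos.le ht.1)
      have hB2 : Real.exp (kappa*|x|) * Real.exp |x| / 2
          ≤ Real.exp (α*t) * Real.cosh (κ'*x) := by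
        calc Real.exp (kappa*|x|) * Real.exp |x| / 2 ≤ Real.cosh (κ'*x) := hcb
          _ ≤ Real.exp (α*t) * Real.cosh (κ'*x) :=
            le_mul_of_one_le_left (Real.cosh_pos _).le hone
      have h4 : ε * (Real.exp (kappa*|x|) * Real.exp |x| / 2)
          ≤ ε * (Real.exp (α*t) * Real.cosh (κ'*x)) :=
        mul_le_mul_of_nonneg_left hB2 hε.le
      nlinarith [h1, h4]
    -- radius
    set R : ℝ := Real.log (2*C/ε + 1) with hRdef
    have hargpos : (0:ℝ) < 2*C/ε + 1 := by positivity
    have houter : ∀ x : ℝ, R ≤ |x| → ∀ t ∈ Set.Icc (0:ℝ) T,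
        0 ≤ w x t + ε * (Real.exp (α*t) * Real.cosh (κ'*x)) := by
      intro x hx t ht
      have hexp : 2*C/ε + 1 ≤ Real.exp |x| := by
        have := Real.exp_le_exp.2 hx
        rwa [Real.exp_log hargpos] at this
      have hval : (ε/2) * (2*C/ε + 1) = C + ε/2 := by field_simp
      have h5 : C + ε/2 ≤ (ε/2) * Real.exp |x| := by
        rw [← hval]
        exact mul_le_mul_of_nonneg_left hexp (by positivity)
      have h6 : 0 ≤ Real.exp (kappa*|x|) * ((ε/2) * Real.exp |x| - C) :=
        mul_nonneg (Real.exp_pos _).le (by linarith)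
      linarith [hlow x t ht]
    -- the bad point is inside the compact region
    have hxbR : |xb| ≤ R := by
      by_contra hxb
      push_neg at hxb
      exact absurd (houter xb hxb.le tb htb) (not_le.2 hneg)
    -- minimize over the compact set
    set K : Set (ℝ × ℝ) := Set.Icc (-R) R ×ˢ Set.Icc 0 T with hKdef
    have hKcompact : IsCompact K := (isCompact_Icc).prod isCompact_Icc
    have hKne : K.Nonempty := ⟨(xb, tb), ⟨abs_le.1 hxbR, htb⟩⟩
    have hvcont : ContinuousOn
        (fun p : ℝ × ℝ => w p.1 p.2 + ε * (Real.exp (α*p.2) * Real.cosh (κ'*p.1))) K := by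
      apply ContinuousOn.mono _ (show K ⊆ Set.univ ×ˢ Set.Icc 0 T from
        fun p hp => ⟨trivial, hp.2⟩)
      have hBc : Continuous (fun p : ℝ × ℝ =>
          ε * (Real.exp (α*p.2) * Real.cosh (κ'*p.1))) :=
        continuous_const.mul
          ((Real.continuous_exp.comp (continuous_const.mul continuous_snd)).mul
            (Real.continuous_cosh.comp (continuous_const.mul continuous_fst)))
      exact hcont.add hBc.continuousOn
    obtain ⟨⟨x₀, t₀⟩, hp₀K, hp₀min⟩ := hKcompact.exists_isMinOn hKne hvcont
    have hminK := isMinOn_iff.mp hp₀min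
    have ht₀Icc : t₀ ∈ Set.Icc (0:ℝ) T := hp₀K.2
    -- minimum value is negative
    have hm0 : w x₀ t₀ + ε * (Real.exp (α*t₀) * Real.cosh (κ'*x₀)) < 0 :=
      lt_of_le_of_lt (hminK (xb, tb) ⟨abs_le.1 hxbR, htb⟩) hneg
    -- global minimality
    have hglobal : ∀ y : ℝ, ∀ s ∈ Set.Icc (0:ℝ) T,
        w x₀ t₀ + ε * (Real.exp (α*t₀) * Real.cosh (κ'*x₀))
          ≤ w y s + ε * (Real.exp (α*s) * Real.cosh (κ'*y)) := by
      intro y s hs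
      by_cases hy : |y| ≤ R
      · exact hminK (y, s) ⟨abs_le.1 hy, hs⟩
      · push_neg at hy
        exact hm0.le.trans (houter y hy.le s hs)
    -- t₀ > 0
    have ht₀0 : 0 < t₀ := by
      rcases lt_or_eq_of_le ht₀Icc.1 with h | h
      · exact h
      · exfalso
        have := hinit x₀
        have hb := hBpos x₀ t₀
        rw [← h] at hm0
        nlinarith [hBpos x₀ 0]
    have ht₀Ioc : t₀ ∈ Set.Ioc (0:ℝ) T := ⟨ht₀0, ht₀Icc.2⟩
    -- abbreviations
    have he : (0:ℝ) < Real.exp (α*t₀) := Real.exp_pos _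
    have hch : (0:ℝ) < Real.cosh (κ'*x₀) := Real.cosh_pos _
    have hsh : |Real.sinh (κ'*x₀)| ≤ Real.cosh (κ'*x₀) := by
      rw [Real.sinh_eq, Real.cosh_eq, abs_div]
      rw [abs_of_pos (show (0:ℝ) < 2 by norm_num)]
      apply div_le_div_of_nonneg_right _ (by norm_num)
      calc |Real.exp (κ'*x₀) - Real.exp (-(κ'*x₀))|
          ≤ |Real.exp (κ'*x₀)| + |Real.exp (-(κ'*x₀))| := abs_sub _ _
        _ = Real.exp (κ'*x₀) + Real.exp (-(κ'*x₀)) := by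
            rw [abs_of_pos (Real.exp_pos _), abs_of_pos (Real.exp_pos _)]
    -- time derivative at the minimum is ≤ 0
    have hBt : HasDerivAt (fun s : ℝ => Real.exp (α*s) * Real.cosh (κ'*x₀))
        (Real.exp (α*t₀) * α * Real.cosh (κ'*x₀)) t₀ := by
      have h1 : HasDerivAt (fun s : ℝ => α * s) α t₀ := by
        simpa using (hasDerivAt_id t₀).const_mul α
      exact h1.exp.mul_const _
    have hvt : HasDerivWithinAt
        (fun s => w x₀ s + ε * (Real.exp (α*s) * Real.cosh (κ'*x₀)))
        (wt x₀ t₀ + ε * (Real.exp (α*t₀) * α * Real.cosh (κ'*x₀))) (Set.Ioc 0 T) t₀ :=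
      (hwt x₀ t₀ ht₀Ioc).add ((hBt.hasDerivWithinAt).const_mul ε)
    have hA : wt x₀ t₀ + ε * (Real.exp (α*t₀) * α * Real.cosh (κ'*x₀)) ≤ 0 := by
      apply aux_min_deriv_nonpos hvt ht₀0 ht₀Icc.2
      intro s hs
      exact hglobal x₀ s ⟨hs.1.le, hs.2.le.trans ht₀Icc.2⟩
    -- space derivatives at the minimum
    have hκy : ∀ y : ℝ, HasDerivAt (fun y : ℝ => κ' * y) κ' y := by
      intro y; simpa using (hasDerivAt_id y).const_mul κ'
    have hg : ∀ y : ℝ, HasDerivAt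
        (fun y => w y t₀ + ε * (Real.exp (α*t₀) * Real.cosh (κ'*y)))
        (wx y t₀ + ε * (Real.exp (α*t₀) * (Real.sinh (κ'*y) * κ'))) y := by
      intro y
      exact (hwx y t₀ ht₀Ioc).add ((((hκy y).cosh).const_mul _).const_mul ε)
    have hgmin : ∀ y : ℝ,
        w x₀ t₀ + ε * (Real.exp (α*t₀) * Real.cosh (κ'*x₀))
          ≤ w y t₀ + ε * (Real.exp (α*t₀) * Real.cosh (κ'*y)) :=
      fun y => hglobal y t₀ ht₀Icc
    have hB1 : wx x₀ t₀ + ε * (Real.exp (α*t₀) * (Real.sinh (κ'*x₀) * κ')) = 0 := by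
      have hlm : IsLocalMin
          (fun y => w y t₀ + ε * (Real.exp (α*t₀) * Real.cosh (κ'*y))) x₀ :=
        Filter.Eventually.of_forall hgmin
      exact hlm.hasDerivAt_eq_zero (hg x₀)
    have hg'x : HasDerivAt
        (fun y => wx y t₀ + ε * (Real.exp (α*t₀) * (Real.sinh (κ'*y) * κ')))
        (wxx x₀ t₀ + ε * (Real.exp (α*t₀) * (Real.cosh (κ'*x₀) * κ' * κ'))) x₀ := by
      have h2 : HasDerivAt (fun y : ℝ => Real.sinh (κ'*y) * κ')
          (Real.cosh (κ'*x₀) * κ' * κ') x₀ := ((hκy x₀).sinh).mul_const κ'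
      exact (hwxx x₀ t₀ ht₀Ioc).add ((h2.const_mul _).const_mul ε)
    have hC2 : 0 ≤ wxx x₀ t₀ + ε * (Real.exp (α*t₀) * (Real.cosh (κ'*x₀) * κ' * κ')) :=
      aux_second_deriv_nonneg hg hgmin hg'x
    -- final contradiction
    have hineq₀ := hineq x₀ t₀ ht₀Ioc
    have ha : (0:ℝ) ≤ (1/2) * (sigma t₀) ^ 2 := by positivity
    have hMb := hMub t₀ ht₀Icc
    have hw0 : w x₀ t₀ < 0 := by nlinarith [hBpos x₀ t₀]
    have hrw : rG * w x₀ t₀ ≤ 0 := mul_nonpos_of_nonneg_of_nonpos hrG hw0.le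
    -- a * wxx ≥ -(stuff)
    have haw := mul_nonneg ha hC2
    -- b * wx bound
    have hwxeq : wx x₀ t₀ = -(ε * (Real.exp (α*t₀) * (Real.sinh (κ'*x₀) * κ'))) := by
      linarith
    have hbs : (qS t₀ - gammaS t₀ - (1/2) * (sigma t₀) ^ 2) * Real.sinh (κ'*x₀)
        ≤ |qS t₀ - gammaS t₀ - (1/2) * (sigma t₀) ^ 2| * Real.cosh (κ'*x₀) := by
      calc (qS t₀ - gammaS t₀ - (1/2) * (sigma t₀) ^ 2) * Real.sinh (κ'*x₀)
          ≤ |(qS t₀ - gammaS t₀ - (1/2) * (sigma t₀) ^ 2) * Real.sinh (κ'*x₀)| :=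
            le_abs_self _
        _ = |qS t₀ - gammaS t₀ - (1/2) * (sigma t₀) ^ 2| * |Real.sinh (κ'*x₀)| :=
            abs_mul _ _
        _ ≤ |qS t₀ - gammaS t₀ - (1/2) * (sigma t₀) ^ 2| * Real.cosh (κ'*x₀) :=
            mul_le_mul_of_nonneg_left hsh (abs_nonneg _)
    have hbw : -(ε * Real.exp (α*t₀) * κ'
          * (|qS t₀ - gammaS t₀ - (1/2) * (sigma t₀) ^ 2| * Real.cosh (κ'*x₀)))
        ≤ (qS t₀ - gammaS t₀ - (1/2) * (sigma t₀) ^ 2) * wx x₀ t₀ := by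
      rw [hwxeq]
      have hnn : (0:ℝ) ≤ ε * Real.exp (α*t₀) * κ' := by positivity
      nlinarith [mul_le_mul_of_nonneg_left hbs hnn]
    have hP : (0:ℝ) < ε * Real.exp (α*t₀) * Real.cosh (κ'*x₀) := by positivity
    have hMbP := mul_le_mul_of_nonneg_left hMb hP.le
    have haw2 : -((1/2) * (sigma t₀) ^ 2 * wxx x₀ t₀)
        ≤ ε * Real.exp (α*t₀) * Real.cosh (κ'*x₀) * ((1/2) * (sigma t₀) ^ 2 * κ' ^ 2) := by
      nlinarith [haw]
    have hαM : ε * Real.exp (α*t₀) * Real.cosh (κ'*x₀) * α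
        = ε * Real.exp (α*t₀) * Real.cosh (κ'*x₀) * M
          + ε * Real.exp (α*t₀) * Real.cosh (κ'*x₀) := by
      rw [hαdef]; ring
    linarith [hineq₀, hA, haw2, hbw, hrw, hMbP, hP, hαM]
  -- conclude
  intro x t ht
  by_contra hneg
  push_neg at hneg
  have hB := hBpos x t
  set εx : ℝ := -(w x t) / (2 * (Real.exp (α*t) * Real.cosh (κ'*x))) with hεdef
  have hεpos : 0 < εx := by
    apply div_pos (by linarith) (by positivity)
  have := key εx hεpos x t ht
  rw [hεdef] at this
  have hBne : Real.exp (α*t) * Real.cosh (κ'*x) ≠ 0 := ne_of_gt hB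
  have heq : -(w x t) / (2 * (Real.exp (α*t) * Real.cosh (κ'*x)))
      * (Real.exp (α*t) * Real.cosh (κ'*x)) = -(w x t) / 2 := by
    field_simp
  rw [heq] at this
  linarith
end

section
/- (Weak comparison.) Let T > 0, let σ : [0,T] → (0,∞) and q_S, γ_S : [0,T] → ℝ be continuous, let r_G ≥ 0, and let f : ℝ × (0,T] → ℝ. Let v̄, v̲ : ℝ × [0,T] → ℝ be continuous, with ∂/∂t, ∂/∂x, ∂²/∂x² existing and continuous on ℝ × (0,T], each satisfying an exponential growth bound |v̄(x,t)|, |v̲(x,t)| ≤ C e^{κ|x|} for some constants C, κ ≥ 0. Suppose ∂v̄/∂t − (1/2)σ(t)² ∂²v̄/∂x² − (q_S(t) − γ_S(t) − (1/2)σ(t)²) ∂v̄/∂x + r_G v̄ ≥ f(x,t) and ∂v̲/∂t − (1/2)σ(t)² ∂²v̲/∂x² − (q_S(t) − γ_S(t) − (1/2)σ(t)²) ∂v̲/∂x + r_G v̲ ≤ f(x,t) on ℝ × (0,T], and v̲(x,0) ≤ v̄(x,0) for all x ∈ ℝ. Then v̲(x,t) ≤ v̄(x,t) for all (x,t) ∈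 ℝ × [0,T]. -/
open Real Set

/-- Regularity of a candidate super- or subsolution `u : ℝ × [0,T] → ℝ` with derivative
witnesses `ut = ∂u/∂t`, `ux = ∂u/∂x`, `uxx = ∂²u/∂x²`: `u` is continuous on
`ℝ × [0,T]`, the derivatives exist and are continuous on `ℝ × (0,T]`, and `u`
satisfies the exponential growth bound `|u(x,t)| ≤ C e^{κ|x|}`. -/
structure IsRegularParabolic (T : ℝ) (u ut ux uxx : ℝ → ℝ → ℝ) (C kappa : ℝ) : Prop where
  cont : ContinuousOn (fun p : ℝ × ℝ => u p.1 p.2) (Set.univ ×ˢ Set.Icc 0 T)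
  hasDeriv_t : ∀ x : ℝ, ∀ t ∈ Set.Ioc (0:ℝ) T,
    HasDerivWithinAt (fun s => u x s) (ut x t) (Set.Ioc 0 T) t
  hasDeriv_x : ∀ x : ℝ, ∀ t ∈ Set.Ioc (0:ℝ) T, HasDerivAt (fun y => u y t) (ux x t) x
  hasDeriv_xx : ∀ x : ℝ, ∀ t ∈ Set.Ioc (0:ℝ) T, HasDerivAt (fun y => ux y t) (uxx x t) x
  cont_t : ContinuousOn (fun p : ℝ × ℝ => ut p.1 p.2) (Set.univ ×ˢ Set.Ioc 0 T)
  cont_x : ContinuousOn (fun p : ℝ × ℝ => ux p.1 p.2) (Set.univ ×ˢ Set.Ioc 0 T)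
  cont_xx : ContinuousOn (fun p : ℝ × ℝ => uxx p.1 p.2) (Set.univ ×ˢ Set.Ioc 0 T)
  growth : ∀ x : ℝ, ∀ t ∈ Set.Icc (0:ℝ) T, |u x t| ≤ C * Real.exp (kappa * |x|)

/-- The parabolic Black–Scholes operator
`𝔏u = ∂u/∂t − (1/2)σ(t)²∂²u/∂x² − (q_S(t) − γ_S(t) − (1/2)σ(t)²)∂u/∂x + r_G u`
evaluated via the derivative witnesses. -/
noncomputable def Lop (sigma qS gammaS : ℝ → ℝ) (rG : ℝ) (u ut ux uxx : ℝ → ℝ → ℝ) (x t : ℝ) : ℝ :=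
  ut x t - (1/2) * (sigma t) ^ 2 * uxx x t
    - (qS t - gammaS t - (1/2) * (sigma t) ^ 2) * ux x t + rG * u x t


open Filter Topology in
/-- One-sided time derivative at a max over `Icc 0 T` taken at `t₀ ∈ Ioc 0 T` is nonnegative. -/
lemma aux_deriv_nonneg_at_max {T t₀ g' : ℝ} {g : ℝ → ℝ}
    (ht₀ : t₀ ∈ Set.Ioc (0:ℝ) T)
    (hd : HasDerivWithinAt g g' (Set.Ioc 0 T) t₀)
    (hmax : ∀ s ∈ Set.Icc (0:ℝ) T, g s ≤ g t₀) : 0 ≤ g' := by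
  have hsub : Set.Ioo (0:ℝ) t₀ ⊆ Set.Ioc 0 T := fun s hs => ⟨hs.1, hs.2.le.trans ht₀.2⟩
  have hd' : HasDerivWithinAt g g' (Set.Ioo 0 t₀) t₀ := hd.mono hsub
  have hne : (𝓝[Set.Ioo (0:ℝ) t₀] t₀).NeBot := right_nhdsWithin_Ioo_neBot ht₀.1
  rw [hasDerivWithinAt_iff_tendsto_slope] at hd'
  have hdiff : Set.Ioo (0:ℝ) t₀ \ {t₀} = Set.Ioo 0 t₀ :=
    Set.diff_singleton_eq_self (by simp)
  rw [hdiff] at hd'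
  refine ge_of_tendsto hd' ?_
  filter_upwards [self_mem_nhdsWithin] with s hs
  have h1 : g s ≤ g t₀ := hmax s ⟨hs.1.le, hs.2.le.trans ht₀.2⟩
  have h2 : s - t₀ < 0 := sub_neg.2 hs.2
  rw [slope_def_field]
  exact div_nonneg_of_nonpos (by linarith) h2.le

open Filter Topology in
/-- Second-derivative test at a global maximum. -/
lemma aux_second_deriv_nonpos {g g' : ℝ → ℝ} {x₀ g'' : ℝ}
    (hmax : ∀ x, g x ≤ g x₀)
    (hg : ∀ x, HasDerivAt g (g' x) x)
    (hg'' : HasDerivAt g' g'' x₀) : g'' ≤ 0 := by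
  by_contra h
  push_neg at h
  have h0 : g' x₀ = 0 := by
    have hl : IsLocalMax g x₀ := Filter.Eventually.of_forall (fun y => hmax y)
    exact hl.hasDerivAt_eq_zero (hg x₀)
  have hslope := hasDerivAt_iff_tendsto_slope.1 hg''
  have hslope' : Tendsto (slope g' x₀) (𝓝[>] x₀) (𝓝 g'') :=
    hslope.mono_left (nhdsWithin_mono _ (fun y hy => ne_of_gt hy))
  have hpos : ∀ᶠ s in 𝓝[>] x₀, 0 < slope g' x₀ s := hslope'.eventually (eventually_gt_nhds h)
  obtain ⟨u, hu, hsub2⟩ := mem_nhdsGT_iff_exists_Ioo_subset.1 hpos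
  set x₁ : ℝ := (x₀ + u) / 2 with hx₁
  have hx₁mem : x₁ ∈ Set.Ioo x₀ u := by
    have hu' : x₀ < u := hu
    constructor <;> simp only [hx₁] <;> linarith
  have hgpos : ∀ s ∈ Set.Ioo x₀ x₁, 0 < g' s := by
    intro s hs
    have hs' : s ∈ Set.Ioo x₀ u := ⟨hs.1, hs.2.trans hx₁mem.2⟩
    have h5 : 0 < slope g' x₀ s := hsub2 hs'
    rw [slope_def_field, h0, sub_zero] at h5
    have hden : 0 < s - x₀ := sub_pos.2 hs.1
    by_contra hc
    push_neg at hc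
    have h6 : g' s / (s - x₀) ≤ 0 := div_nonpos_of_nonpos_of_nonneg hc hden.le
    linarith
  have hmono : StrictMonoOn g (Set.Icc x₀ x₁) := by
    apply strictMonoOn_of_deriv_pos (convex_Icc x₀ x₁)
    · exact fun x _ => (hg x).continuousAt.continuousWithinAt
    · intro x hx
      rw [interior_Icc] at hx
      rw [(hg x).deriv]
      exact hgpos x hx
  have hlt : g x₀ < g x₁ :=
    hmono (Set.left_mem_Icc.2 hx₁mem.1.le) ⟨hx₁mem.1.le, le_refl _⟩ hx₁mem.1
  exact absurd (hmax x₁) (not_le.2 hlt)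

set_option maxHeartbeats 2000000 in
/-- Weak comparison: a supersolution `v̄` and a subsolution `v̲` of
`∂v/∂t − 𝒜(t)v + r_G v = f`, both of exponential growth, ordered at `t = 0`,
are ordered on all of `ℝ × [0,T]`. -/
theorem stmt_10 (T : ℝ) (hT : 0 < T) (sigma qS gammaS : ℝ → ℝ)
    (hsigmac : ContinuousOn sigma (Set.Icc 0 T))
    (hsigmapos : ∀ t ∈ Set.Icc (0:ℝ) T, 0 < sigma t)
    (hqc : ContinuousOn qS (Set.Icc 0 T)) (hgc : ContinuousOn gammaS (Set.Icc 0 T))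
    (rG : ℝ) (hrG : 0 ≤ rG) (f : ℝ → ℝ → ℝ)
    (vsup vsupt vsupx vsupxx vsub vsubt vsubx vsubxx : ℝ → ℝ → ℝ)
    (C kappa : ℝ) (hC : 0 ≤ C) (hkappa : 0 ≤ kappa)
    (hregsup : IsRegularParabolic T vsup vsupt vsupx vsupxx C kappa)
    (hregsub : IsRegularParabolic T vsub vsubt vsubx vsubxx C kappa)
    (hsup : ∀ x : ℝ, ∀ t ∈ Set.Ioc (0:ℝ) T,
      Lop sigma qS gammaS rG vsup vsupt vsupx vsupxx x t ≥ f x t)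
    (hsub : ∀ x : ℝ, ∀ t ∈ Set.Ioc (0:ℝ) T,
      Lop sigma qS gammaS rG vsub vsubt vsubx vsubxx x t ≤ f x t)
    (hinit : ∀ x : ℝ, vsub x 0 ≤ vsup x 0) :
    ∀ x : ℝ, ∀ t ∈ Set.Icc (0:ℝ) T, vsub x t ≤ vsup x t := by
  -- the exponential barrier exponent in space
  set β : ℝ := kappa + 1 with hβdef
  have hβpos : 0 < β := by positivity
  -- a uniform bound on the coefficients
  obtain ⟨α, hαpos, hα⟩ : ∃ α : ℝ, 0 < α ∧ ∀ t ∈ Set.Icc (0:ℝ) T,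
      (1/2) * (sigma t)^2 * β^2 + |qS t - gammaS t - (1/2) * (sigma t)^2| * β + 1 ≤ α := by
    have hbc : ContinuousOn
        (fun t => (1/2) * (sigma t)^2 * β^2 + |qS t - gammaS t - (1/2) * (sigma t)^2| * β)
        (Set.Icc 0 T) := by
      apply ContinuousOn.add
      · exact (continuousOn_const.mul (hsigmac.pow 2)).mul continuousOn_const
      · exact (((hqc.sub hgc).sub (continuousOn_const.mul (hsigmac.pow 2))).abs).mul
          continuousOn_const
    obtain ⟨tM, htM, hM⟩ := isCompact_Icc.exists_isMaxOn (Set.nonempty_Icc.2 hT.le) hbc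
    refine ⟨max ((1/2) * (sigma tM)^2 * β^2 + |qS tM - gammaS tM - (1/2) * (sigma tM)^2| * β) 0
      + 1, by positivity, fun t ht => ?_⟩
    have h1 : (1/2) * (sigma t)^2 * β^2 + |qS t - gammaS t - (1/2) * (sigma t)^2| * β ≤
        (1/2) * (sigma tM)^2 * β^2 + |qS tM - gammaS tM - (1/2) * (sigma tM)^2| * β := hM ht
    have h2 := le_max_left
      ((1/2) * (sigma tM)^2 * β^2 + |qS tM - gammaS tM - (1/2) * (sigma tM)^2| * β) (0:ℝ)
    linarith
  -- the key estimate with the barrier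
  have key : ∀ ε : ℝ, 0 < ε → ∀ x : ℝ, ∀ t ∈ Set.Icc (0:ℝ) T,
      vsub x t - vsup x t ≤ ε * (Real.exp (α * t) * Real.cosh (β * x)) := by
    intro ε hε
    by_contra hcon
    push_neg at hcon
    obtain ⟨x₁, t₁, ht₁, hx₁⟩ := hcon
    set z : ℝ → ℝ → ℝ :=
      fun x t => vsub x t - vsup x t - ε * (Real.exp (α * t) * Real.cosh (β * x)) with hzdef
    have hz₁ : 0 < z x₁ t₁ := by simp only [hzdef]; linarith
    have hzc : ContinuousOn (fun p : ℝ × ℝ => z p.1 p.2) (Set.univ ×ˢ Set.Icc 0 T) := by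
      simp only [hzdef]
      exact (hregsub.cont.sub hregsup.cont).sub (Continuous.continuousOn (by fun_prop))
    -- negative outside a compact interval in space
    have hout : ∀ x : ℝ, Real.log (4 * C / ε + 1) < |x| → ∀ t ∈ Set.Icc (0:ℝ) T, z x t < 0 := by
      intro x hx t ht
      have h1 := abs_le.1 (hregsub.growth x t ht)
      have h2 := abs_le.1 (hregsup.growth x t ht)
      have hch : Real.exp (β * |x|) / 2 ≤ Real.cosh (β * x) := by
        rw [← Real.cosh_abs, abs_mul, abs_of_pos hβpos, Real.cosh_eq]
        have := Real.exp_pos (-(β * |x|))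
        linarith
      have hE1 : (1:ℝ) ≤ Real.exp (α * t) := Real.one_le_exp (mul_nonneg hαpos.le ht.1)
      have hxlog : 4 * C / ε + 1 < Real.exp |x| := by
        calc 4 * C / ε + 1 = Real.exp (Real.log (4 * C / ε + 1)) :=
              (Real.exp_log (by positivity)).symm
        _ < Real.exp |x| := Real.exp_lt_exp.2 hx
      have hxlog' : 4 * C + ε < ε * Real.exp |x| := by
        have h3 := mul_lt_mul_of_pos_left hxlog hε
        have h4 : ε * (4 * C / ε) = 4 * C := by field_simp
        nlinarith
      have hsplit : Real.exp (β * |x|) = Real.exp (kappa * |x|) * Real.exp |x| := by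
        rw [← Real.exp_add]; congr 1; rw [hβdef]; ring
      have hek : 0 < Real.exp (kappa * |x|) := Real.exp_pos _
      have hchpos : 0 < Real.cosh (β * x) := Real.cosh_pos _
      have hmul : ε * Real.cosh (β * x) ≤ ε * (Real.exp (α * t) * Real.cosh (β * x)) := by
        nlinarith [mul_nonneg (mul_pos hε hchpos).le (sub_nonneg.2 hE1)]
      simp only [hzdef]
      nlinarith [mul_le_mul_of_nonneg_left hch hε.le, mul_pos hek (sub_pos.2 hxlog'),
        Real.exp_pos |x|]
    -- maximize over a compact box
    set R : ℝ := max (Real.log (4 * C / ε + 1)) |x₁| with hRdef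
    have hKc : IsCompact (Set.Icc (-R) R ×ˢ Set.Icc (0:ℝ) T) := isCompact_Icc.prod isCompact_Icc
    have hx₁K : (x₁, t₁) ∈ Set.Icc (-R) R ×ˢ Set.Icc (0:ℝ) T := by
      refine ⟨?_, ht₁⟩
      have h3 : |x₁| ≤ R := le_max_right _ _
      exact Set.mem_Icc.2 (abs_le.1 h3)
    obtain ⟨⟨x₀, t₀⟩, hK₀, hmaxK⟩ := hKc.exists_isMaxOn ⟨_, hx₁K⟩
      (hzc.mono (fun p hp => ⟨Set.mem_univ _, hp.2⟩))
    have hglob : ∀ x' : ℝ, ∀ t' ∈ Set.Icc (0:ℝ) T, z x' t' ≤ z x₀ t₀ := by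
      intro x' t' ht'
      by_cases hxR : |x'| ≤ R
      · exact hmaxK (show (x', t') ∈ Set.Icc (-R) R ×ˢ Set.Icc (0:ℝ) T from
          ⟨Set.mem_Icc.2 (abs_le.1 hxR), ht'⟩)
      · have h5 := hout x' (lt_of_le_of_lt (le_max_left _ _) (not_le.1 hxR)) t' ht'
        have h6 : z x₁ t₁ ≤ z x₀ t₀ := hmaxK hx₁K
        linarith
    have hpos : 0 < z x₀ t₀ := lt_of_lt_of_le hz₁ (hmaxK hx₁K)
    have ht₀Icc : t₀ ∈ Set.Icc (0:ℝ) T := hK₀.2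
    have ht₀ : t₀ ∈ Set.Ioc (0:ℝ) T := by
      rcases eq_or_lt_of_le ht₀Icc.1 with h | h
      · exfalso
        have h8 : z x₀ 0 < 0 := by
          simp only [hzdef, mul_zero, Real.exp_zero, one_mul]
          nlinarith [hinit x₀, Real.one_le_cosh (β * x₀)]
        rw [← h] at hpos
        exact absurd hpos (not_lt.2 h8.le)
      · exact ⟨h, ht₀Icc.2⟩
    -- time derivative of z at the max is nonnegative
    have hdt : HasDerivWithinAt (fun s => z x₀ s)
        (vsubt x₀ t₀ - vsupt x₀ t₀ - ε * (α * Real.exp (α * t₀) * Real.cosh (β * x₀)))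
        (Set.Ioc 0 T) t₀ := by
      simp only [hzdef]
      have h1 := hregsub.hasDeriv_t x₀ t₀ ht₀
      have h2 := hregsup.hasDeriv_t x₀ t₀ ht₀
      have h3 : HasDerivAt (fun s : ℝ => ε * (Real.exp (α * s) * Real.cosh (β * x₀)))
          (ε * (α * Real.exp (α * t₀) * Real.cosh (β * x₀))) t₀ := by
        have h4 : HasDerivAt (fun s : ℝ => α * s) (α * 1) t₀ := (hasDerivAt_id t₀).const_mul α
        have h5 := ((h4.exp).mul_const (Real.cosh (β * x₀))).const_mul ε
        exact h5.congr_deriv (by ring)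
      exact (h1.sub h2).sub h3.hasDerivWithinAt
    have hzt : 0 ≤ vsubt x₀ t₀ - vsupt x₀ t₀
        - ε * (α * Real.exp (α * t₀) * Real.cosh (β * x₀)) :=
      aux_deriv_nonneg_at_max ht₀ hdt (fun s hs => hglob x₀ s hs)
    -- space derivatives of z at the max
    have hgx : ∀ y : ℝ, HasDerivAt (fun y' => z y' t₀)
        ((fun y => vsubx y t₀ - vsupx y t₀
          - ε * (Real.exp (α * t₀) * (Real.sinh (β * y) * β))) y) y := by
      intro y
      simp only [hzdef]
      have h1 := hregsub.hasDeriv_x y t₀ ht₀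
      have h2 := hregsup.hasDeriv_x y t₀ ht₀
      have h3 : HasDerivAt (fun y' : ℝ => ε * (Real.exp (α * t₀) * Real.cosh (β * y')))
          (ε * (Real.exp (α * t₀) * (Real.sinh (β * y) * β))) y := by
        have h4 : HasDerivAt (fun y' : ℝ => β * y') (β * 1) y := (hasDerivAt_id y).const_mul β
        have h5 := (h4.cosh.const_mul (Real.exp (α * t₀))).const_mul ε
        exact h5.congr_deriv (by ring)
      exact (h1.sub h2).sub h3
    have hgxx : HasDerivAt
        (fun y => vsubx y t₀ - vsupx y t₀ - ε * (Real.exp (α * t₀) * (Real.sinh (β * y) * β)))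
        (vsubxx x₀ t₀ - vsupxx x₀ t₀
          - ε * (Real.exp (α * t₀) * (Real.cosh (β * x₀) * β^2))) x₀ := by
      have h1 := hregsub.hasDeriv_xx x₀ t₀ ht₀
      have h2 := hregsup.hasDeriv_xx x₀ t₀ ht₀
      have h3 : HasDerivAt (fun y : ℝ => ε * (Real.exp (α * t₀) * (Real.sinh (β * y) * β)))
          (ε * (Real.exp (α * t₀) * (Real.cosh (β * x₀) * β^2))) x₀ := by
        have h4 : HasDerivAt (fun y' : ℝ => β * y') (β * 1) x₀ := (hasDerivAt_id x₀).const_mul β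
        have h5 := ((h4.sinh.mul_const β).const_mul (Real.exp (α * t₀))).const_mul ε
        exact h5.congr_deriv (by ring)
      exact (h1.sub h2).sub h3
    have hzx : vsubx x₀ t₀ - vsupx x₀ t₀
        - ε * (Real.exp (α * t₀) * (Real.sinh (β * x₀) * β)) = 0 := by
      have hl : IsLocalMax (fun y => z y t₀) x₀ :=
        Filter.Eventually.of_forall (fun y => hglob y t₀ ht₀Icc)
      exact hl.hasDerivAt_eq_zero (hgx x₀)
    have hzxx : vsubxx x₀ t₀ - vsupxx x₀ t₀
        - ε * (Real.exp (α * t₀) * (Real.cosh (β * x₀) * β^2)) ≤ 0 :=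
      aux_second_deriv_nonpos (fun y => hglob y t₀ ht₀Icc) hgx hgxx
    -- combine with the differential inequalities
    have hLsub := hsub x₀ t₀ ht₀
    have hLsup := hsup x₀ t₀ ht₀
    simp only [Lop, ge_iff_le] at hLsub hLsup
    have hcomb : vsubt x₀ t₀ - vsupt x₀ t₀
        - (1/2) * (sigma t₀)^2 * (vsubxx x₀ t₀ - vsupxx x₀ t₀)
        - (qS t₀ - gammaS t₀ - (1/2) * (sigma t₀)^2) * (vsubx x₀ t₀ - vsupx x₀ t₀)
        + rG * (vsub x₀ t₀ - vsup x₀ t₀) ≤ 0 := by linarith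
    have hzpos' : 0 < vsub x₀ t₀ - vsup x₀ t₀
        - ε * (Real.exp (α * t₀) * Real.cosh (β * x₀)) := by
      simp only [hzdef] at hpos; exact hpos
    have hE : (1:ℝ) ≤ Real.exp (α * t₀) := Real.one_le_exp (mul_nonneg hαpos.le ht₀.1.le)
    have hCh : (1:ℝ) ≤ Real.cosh (β * x₀) := Real.one_le_cosh _
    have hSh : |Real.sinh (β * x₀)| ≤ Real.cosh (β * x₀) := by
      nlinarith [Real.cosh_sq (β * x₀), Real.cosh_pos (β * x₀),
        abs_nonneg (Real.sinh (β * x₀)), sq_abs (Real.sinh (β * x₀))]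
    have hαt := hα t₀ ht₀Icc
    have s4 : (1/2) * (sigma t₀)^2 * (vsubxx x₀ t₀ - vsupxx x₀ t₀)
        ≤ (1/2) * (sigma t₀)^2 * (ε * (Real.exp (α * t₀) * (Real.cosh (β * x₀) * β^2))) :=
      mul_le_mul_of_nonneg_left (by linarith) (by positivity)
    have s5 : rG * (ε * (Real.exp (α * t₀) * Real.cosh (β * x₀)))
        ≤ rG * (vsub x₀ t₀ - vsup x₀ t₀) :=
      mul_le_mul_of_nonneg_left (by linarith) hrG
    have s3 : (qS t₀ - gammaS t₀ - (1/2) * (sigma t₀)^2) * (vsubx x₀ t₀ - vsupx x₀ t₀)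
        = (qS t₀ - gammaS t₀ - (1/2) * (sigma t₀)^2)
          * (ε * (Real.exp (α * t₀) * (Real.sinh (β * x₀) * β))) := by
      congr 1
      linarith
    have q : ε * (α * Real.exp (α * t₀) * Real.cosh (β * x₀))
        - (1/2) * (sigma t₀)^2 * (ε * (Real.exp (α * t₀) * (Real.cosh (β * x₀) * β^2)))
        - (qS t₀ - gammaS t₀ - (1/2) * (sigma t₀)^2)
          * (ε * (Real.exp (α * t₀) * (Real.sinh (β * x₀) * β)))
        + rG * (ε * (Real.exp (α * t₀) * Real.cosh (β * x₀))) ≤ 0 := by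
      linarith [hcomb, hzt, s4, s5, s3]
    -- the barrier is a strict supersolution: contradiction
    have hbb : (qS t₀ - gammaS t₀ - (1/2) * (sigma t₀)^2) * (Real.sinh (β * x₀) * β)
        ≤ |qS t₀ - gammaS t₀ - (1/2) * (sigma t₀)^2| * (Real.cosh (β * x₀) * β) := by
      calc (qS t₀ - gammaS t₀ - (1/2) * (sigma t₀)^2) * (Real.sinh (β * x₀) * β)
          ≤ |(qS t₀ - gammaS t₀ - (1/2) * (sigma t₀)^2) * (Real.sinh (β * x₀) * β)| :=
            le_abs_self _
        _ = |qS t₀ - gammaS t₀ - (1/2) * (sigma t₀)^2| * (|Real.sinh (β * x₀)| * β) := by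
            rw [abs_mul, abs_mul, abs_of_pos hβpos]
        _ ≤ |qS t₀ - gammaS t₀ - (1/2) * (sigma t₀)^2| * (Real.cosh (β * x₀) * β) := by
            apply mul_le_mul_of_nonneg_left _ (abs_nonneg _)
            exact mul_le_mul_of_nonneg_right hSh hβpos.le
    have hinner : Real.cosh (β * x₀)
        ≤ α * Real.cosh (β * x₀) - (1/2) * (sigma t₀)^2 * (Real.cosh (β * x₀) * β^2)
          - (qS t₀ - gammaS t₀ - (1/2) * (sigma t₀)^2) * (Real.sinh (β * x₀) * β)
          + rG * Real.cosh (β * x₀) := by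
      have h2 : Real.cosh (β * x₀)
            * ((1/2) * (sigma t₀)^2 * β^2 + |qS t₀ - gammaS t₀ - (1/2) * (sigma t₀)^2| * β + 1)
          ≤ Real.cosh (β * x₀) * α :=
        mul_le_mul_of_nonneg_left hαt (Real.cosh_pos _).le
      have h3 : 0 ≤ rG * Real.cosh (β * x₀) := mul_nonneg hrG (Real.cosh_pos _).le
      nlinarith [hbb]
    have hεE : 0 < ε * Real.exp (α * t₀) := by positivity
    have hfac : ε * (α * Real.exp (α * t₀) * Real.cosh (β * x₀))
        - (1/2) * (sigma t₀)^2 * (ε * (Real.exp (α * t₀) * (Real.cosh (β * x₀) * β^2)))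
        - (qS t₀ - gammaS t₀ - (1/2) * (sigma t₀)^2)
          * (ε * (Real.exp (α * t₀) * (Real.sinh (β * x₀) * β)))
        + rG * (ε * (Real.exp (α * t₀) * Real.cosh (β * x₀)))
        = (ε * Real.exp (α * t₀))
          * (α * Real.cosh (β * x₀) - (1/2) * (sigma t₀)^2 * (Real.cosh (β * x₀) * β^2)
            - (qS t₀ - gammaS t₀ - (1/2) * (sigma t₀)^2) * (Real.sinh (β * x₀) * β)
            + rG * Real.cosh (β * x₀)) := by ring
    rw [hfac] at q
    have hfin : ε * Real.exp (α * t₀) * 1 ≤ (ε * Real.exp (α * t₀))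
          * (α * Real.cosh (β * x₀) - (1/2) * (sigma t₀)^2 * (Real.cosh (β * x₀) * β^2)
            - (qS t₀ - gammaS t₀ - (1/2) * (sigma t₀)^2) * (Real.sinh (β * x₀) * β)
            + rG * Real.cosh (β * x₀)) :=
      mul_le_mul_of_nonneg_left (hCh.trans hinner) hεE.le
    nlinarith
  -- finish: let ε → 0
  intro x t ht
  by_contra hlt
  push_neg at hlt
  have hP : 0 < Real.exp (α * t) * Real.cosh (β * x) :=
    mul_pos (Real.exp_pos _) (Real.cosh_pos _)
  have hw : 0 < vsub x t - vsup x t := sub_pos.2 hlt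
  have hk := key ((vsub x t - vsup x t) / (2 * (Real.exp (α * t) * Real.cosh (β * x))))
    (by positivity) x t ht
  have heq : (vsub x t - vsup x t) / (2 * (Real.exp (α * t) * Real.cosh (β * x)))
      * (Real.exp (α * t) * Real.cosh (β * x)) = (vsub x t - vsup x t) / 2 := by
    field_simp
  rw [heq] at hk
  linarith
end

section
/- (Increasing monotone iteration step.) Let T > 0, let σ : [0,T] → (0,∞) and q_S, γ_S : [0,T] → ℝ be continuous, let r_G ≥ 0, and let G : ℝ × ℝ × [0,T] → ℝ be monotone nondecreasing in its first argument. Let u₀, w_m, w_{m+1} : ℝ × [0,T] → ℝ be continuous, with all derivatives ∂/∂t, ∂/∂x, ∂²/∂x² existing and continuous on ℝ × (0,T], each satisfying an exponential growth bound |u(x,t)| ≤ C e^{κ|x|}. Write 𝔏u = ∂u/∂t − (1/2)σ(t)² ∂²u/∂x² − (q_S(t) − γ_S(t) − (1/2)σ(t)²) ∂u/∂x + r_G u. Assume: (i) 𝔏u₀ ≥ G(u₀(x,t);x,t) and 𝔏(−u₀) ≤ G(−u₀(x,t);x,t) on ℝ × (0,T] with −u₀(x,0) ≤ v₀(x) ≤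 u₀(x,0); (ii) 𝔏w_{m+1} = G(w_m(x,t);x,t) on ℝ × (0,T] with w_{m+1}(x,0) = v₀(x); (iii) −u₀ ≤ w_m ≤ u₀ on ℝ × [0,T], w_m(x,0) = v₀(x), and 𝔏w_m ≤ G(w_m(x,t);x,t) on ℝ × (0,T]. Then −u₀(x,t) ≤ w_m(x,t) ≤ w_{m+1}(x,t) ≤ u₀(x,t) for all (x,t) ∈ ℝ × [0,T], and 𝔏w_{m+1} ≤ G(w_{m+1}(x,t);x,t) on ℝ × (0,T]. -/
open Real Set
open Topology Filter

private lemma aux_abs_sinh_le_cosh (y : ℝ) : |Real.sinh y| ≤ Real.cosh y := by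
  rw [Real.abs_sinh, ← Real.cosh_abs]
  exact (Real.sinh_lt_cosh _).le

private lemma aux_half_exp_abs_le_cosh (y : ℝ) : Real.exp |y| / 2 ≤ Real.cosh y := by
  rw [← Real.cosh_abs, Real.cosh_eq]
  have := (Real.exp_pos (-|y|)).le
  rcases abs_choice y with h | h <;> nlinarith [Real.exp_pos |y|]

private lemma aux_hmul (c y : ℝ) : HasDerivAt (fun s : ℝ => c * s) c y := by
  simpa using (hasDerivAt_id y).const_mul c

/-- Second derivative test at a global minimum. -/
private lemma aux_second_deriv_nonneg_s12 (g g' : ℝ → ℝ) (x₀ g'' : ℝ)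
    (hd : ∀ y, HasDerivAt g (g' y) y)
    (hd2 : HasDerivAt g' g'' x₀)
    (hmin : ∀ y, g x₀ ≤ g y) : 0 ≤ g'' := by
  by_contra hneg
  push_neg at hneg
  have h0 : g' x₀ = 0 := by
    have hloc : IsLocalMin g x₀ := Filter.Eventually.of_forall hmin
    exact hloc.hasDerivAt_eq_zero (hd x₀)
  have hslope := hasDerivAt_iff_tendsto_slope.mp hd2
  have hev : ∀ᶠ y in 𝓝[>] x₀, slope g' x₀ y < g'' / 2 := by
    have h1 : ∀ᶠ y in 𝓝[≠] x₀, slope g' x₀ y < g'' / 2 :=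
      hslope.eventually_lt_const (by linarith)
    exact h1.filter_mono (nhdsWithin_mono x₀ (fun y hy => ne_of_gt hy))
  obtain ⟨u, hu, hsub⟩ := mem_nhdsGT_iff_exists_Ioo_subset.mp hev
  have hgneg : ∀ y ∈ Set.Ioo x₀ u, g' y < 0 := by
    intro y hy
    have hs := hsub hy
    rw [Set.mem_setOf_eq, slope_def_field, h0, sub_zero] at hs
    have hyx : 0 < y - x₀ := sub_pos.mpr hy.1
    rw [div_lt_iff₀ hyx] at hs
    nlinarith [hs, hyx, hneg]
  set m := (x₀ + u) / 2 with hm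
  have hx₀u : x₀ < u := hu
  have hx₀m : x₀ < m := by rw [hm]; linarith
  have hmu : m < u := by rw [hm]; linarith
  have hanti : StrictAntiOn g (Set.Icc x₀ m) := by
    apply strictAntiOn_of_deriv_neg (convex_Icc _ _)
    · exact (Differentiable.continuous (fun y => (hd y).differentiableAt)).continuousOn
    · intro y hy
      rw [interior_Icc] at hy
      rw [(hd y).deriv]
      exact hgneg y ⟨hy.1, hy.2.trans hmu⟩
  have : g m < g x₀ :=
    hanti (Set.left_mem_Icc.mpr hx₀m.le) (Set.right_mem_Icc.mpr hx₀m.le) hx₀m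
  linarith [hmin m]

/-- One-sided derivative at a minimum attained at an interior-or-right time. -/
private lemma aux_deriv_nonpos (f : ℝ → ℝ) (T t₀ d : ℝ) (h0 : 0 < t₀) (hle : t₀ ≤ T)
    (hd : HasDerivWithinAt f d (Set.Ioc 0 T) t₀)
    (hmin : ∀ t ∈ Set.Icc (0:ℝ) T, f t₀ ≤ f t) : d ≤ 0 := by
  have hsub : Set.Ioo (0:ℝ) t₀ ⊆ Set.Ioc 0 T := fun y hy => ⟨hy.1, hy.2.le.trans hle⟩
  have hd' : HasDerivWithinAt f d (Set.Ioo 0 t₀) t₀ := hd.mono hsub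
  have hslope := hasDerivWithinAt_iff_tendsto_slope.mp hd'
  have hdiff : Set.Ioo (0:ℝ) t₀ \ {t₀} = Set.Ioo 0 t₀ :=
    Set.diff_singleton_eq_self (by simp)
  rw [hdiff] at hslope
  haveI hne : (𝓝[Set.Ioo (0:ℝ) t₀] t₀).NeBot := by
    rw [nhdsWithin_Ioo_eq_nhdsLT h0]; infer_instance
  refine le_of_tendsto hslope ?_
  filter_upwards [self_mem_nhdsWithin] with y hy
  have hy' : y ∈ Set.Icc (0:ℝ) T := ⟨hy.1.le, hy.2.le.trans hle⟩
  rw [slope_def_field]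
  apply div_nonpos_of_nonneg_of_nonpos
  · linarith [hmin y hy']
  · linarith [hy.2]

set_option maxHeartbeats 1600000 in
/-- Phragmén–Lindelöf comparison principle for the linear parabolic operator
with bounded coefficients and exponential growth. -/
private lemma comparison (T : ℝ) (hT : 0 < T) (sigma b : ℝ → ℝ)
    (hσ : ContinuousOn sigma (Set.Icc 0 T)) (hb : ContinuousOn b (Set.Icc 0 T))
    (rG : ℝ) (hrG : 0 ≤ rG)
    (z zt zx zxx : ℝ → ℝ → ℝ) (A kappa : ℝ) (hA : 0 ≤ A) (hkappa : 0 ≤ kappa)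
    (hcont : ContinuousOn (fun p : ℝ × ℝ => z p.1 p.2) (Set.univ ×ˢ Set.Icc 0 T))
    (ht : ∀ x : ℝ, ∀ t ∈ Set.Ioc (0:ℝ) T,
      HasDerivWithinAt (fun s => z x s) (zt x t) (Set.Ioc 0 T) t)
    (hx : ∀ x : ℝ, ∀ t ∈ Set.Ioc (0:ℝ) T, HasDerivAt (fun y => z y t) (zx x t) x)
    (hxx : ∀ x : ℝ, ∀ t ∈ Set.Ioc (0:ℝ) T, HasDerivAt (fun y => zx y t) (zxx x t) x)
    (hgrow : ∀ x : ℝ, ∀ t ∈ Set.Icc (0:ℝ) T, |z x t| ≤ A * Real.exp (kappa * |x|))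
    (hineq : ∀ x : ℝ, ∀ t ∈ Set.Ioc (0:ℝ) T,
      0 ≤ zt x t - (1/2) * (sigma t)^2 * zxx x t - b t * zx x t + rG * z x t)
    (hinit : ∀ x : ℝ, 0 ≤ z x 0) :
    ∀ x : ℝ, ∀ t ∈ Set.Icc (0:ℝ) T, 0 ≤ z x t := by
  -- bound the coefficients on the compact time interval
  obtain ⟨M₁, hM₁⟩ := (isCompact_Icc (a := (0:ℝ)) (b := T)).exists_bound_of_continuousOn
    (hσ.pow 2)
  obtain ⟨M₂, hM₂⟩ := (isCompact_Icc (a := (0:ℝ)) (b := T)).exists_bound_of_continuousOn hb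
  set M : ℝ := max M₁ (max M₂ 0) with hMdef
  have hM0 : 0 ≤ M := le_trans (le_max_right _ _) (le_max_right _ _)
  have hMσ : ∀ t ∈ Set.Icc (0:ℝ) T, (sigma t)^2 ≤ M := by
    intro t htI
    have := hM₁ t htI
    rw [Real.norm_eq_abs, abs_of_nonneg (sq_nonneg _)] at this
    exact this.trans (le_max_left _ _)
  have hMb : ∀ t ∈ Set.Icc (0:ℝ) T, |b t| ≤ M := by
    intro t htI
    have := hM₂ t htI
    rw [Real.norm_eq_abs] at this
    exact this.trans ((le_max_left _ _).trans (le_max_right _ _))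
  set μ : ℝ := kappa + 1 with hμdef
  have hμ0 : 0 < μ := by rw [hμdef]; linarith
  set lam : ℝ := M/2 * μ^2 + M * μ + 1 with hlamdef
  have hlam0 : 0 < lam := by rw [hlamdef]; positivity
  clear_value M μ lam
  -- key step: for each ε > 0 the perturbed function is nonnegative
  have key : ∀ ε : ℝ, 0 < ε → ∀ x₁ : ℝ, ∀ t₁ ∈ Set.Icc (0:ℝ) T,
      0 ≤ z x₁ t₁ + ε * Real.exp (lam * t₁) * Real.cosh (μ * x₁) := by
    intro ε hε x₁ t₁ ht₁
    set v : ℝ → ℝ → ℝ := fun x t => z x t + ε * Real.exp (lam * t) * Real.cosh (μ * x)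
      with hv
    -- strict positivity of v for large |x|
    have hR' : ∀ x : ℝ, 2 * A / ε + 1 ≤ Real.exp |x| → ∀ t ∈ Set.Icc (0:ℝ) T,
        0 < v x t := by
      intro x hxl t htI
      have hzlb : -(A * Real.exp (kappa * |x|)) ≤ z x t := (abs_le.mp (hgrow x t htI)).1
      have hexp1 : (1:ℝ) ≤ Real.exp (lam * t) :=
        Real.one_le_exp (mul_nonneg hlam0.le htI.1)
      have hcosh2 : Real.exp (μ * |x|) / 2 ≤ Real.cosh (μ * x) := by
        have h1 := aux_half_exp_abs_le_cosh (μ * x)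
        rwa [abs_mul, abs_of_nonneg hμ0.le] at h1
      have hsplit : Real.exp (μ * |x|) = Real.exp (kappa * |x|) * Real.exp |x| := by
        rw [← Real.exp_add]; congr 1; rw [hμdef]; ring
      have hlarge2 : 2 * A + ε ≤ ε * Real.exp |x| := by
        have h2 := mul_le_mul_of_nonneg_left hxl hε.le
        have h3 : ε * (2 * A / ε + 1) = 2 * A + ε := by field_simp
        linarith
      have hEk : (0:ℝ) < Real.exp (kappa * |x|) := Real.exp_pos _
      have hc1 : ε * (Real.exp (kappa * |x|) * Real.exp |x| / 2)
          ≤ ε * (Real.exp (lam * t) * Real.cosh (μ * x)) := by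
        apply mul_le_mul_of_nonneg_left _ hε.le
        calc Real.exp (kappa * |x|) * Real.exp |x| / 2
            = Real.exp (μ * |x|) / 2 := by rw [hsplit]
          _ ≤ Real.cosh (μ * x) := hcosh2
          _ ≤ Real.exp (lam * t) * Real.cosh (μ * x) :=
              le_mul_of_one_le_left (Real.cosh_pos _).le hexp1
      have hc2 := mul_le_mul_of_nonneg_right hlarge2
        (by positivity : (0:ℝ) ≤ Real.exp (kappa * |x|) / 2)
      have hεEk : (0:ℝ) < ε * Real.exp (kappa * |x|) := mul_pos hε hEk
      show 0 < z x t + ε * Real.exp (lam * t) * Real.cosh (μ * x)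
      linarith [hzlb, hc1, hc2, hεEk]
    set R : ℝ := max |x₁| (Real.log (2 * A / ε + 1)) with hRdef
    have hRout : ∀ x : ℝ, R ≤ |x| → ∀ t ∈ Set.Icc (0:ℝ) T, 0 < v x t := by
      intro x hxR t htI
      apply hR' x _ t htI
      calc 2 * A / ε + 1 = Real.exp (Real.log (2 * A / ε + 1)) :=
            (Real.exp_log (by positivity)).symm
        _ ≤ Real.exp |x| := Real.exp_le_exp.mpr ((le_max_right _ _).trans (hRdef ▸ hxR))
    -- min over a compact rectangle
    set K : Set (ℝ × ℝ) := Set.Icc (-R) R ×ˢ Set.Icc 0 T with hK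
    have hKc : IsCompact K := isCompact_Icc.prod isCompact_Icc
    have hx₁R : |x₁| ≤ R := le_max_left _ _
    have hmem₁ : (x₁, t₁) ∈ K := ⟨abs_le.mp hx₁R, ht₁⟩
    have hvcont : ContinuousOn (fun p : ℝ × ℝ => v p.1 p.2) K := by
      apply ContinuousOn.add
      · exact hcont.mono (fun p hp => ⟨Set.mem_univ _, hp.2⟩)
      · apply Continuous.continuousOn
        exact continuous_const.mul ((Real.continuous_exp.comp (continuous_const.mul
          continuous_snd)))|>.mul (Real.continuous_cosh.comp (continuous_const.mul
          continuous_fst))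
    obtain ⟨⟨x₀, t₀⟩, hmemK, hminK⟩ := hKc.exists_isMinOn ⟨_, hmem₁⟩ hvcont
    have hminK' : ∀ p ∈ K, v x₀ t₀ ≤ v p.1 p.2 := fun p hp => hminK hp
    rcases le_or_gt 0 (v x₀ t₀) with hpos | hneg
    · exact hpos.trans (hminK' (x₁, t₁) hmem₁)
    exfalso
    have ht₀mem : t₀ ∈ Set.Icc (0:ℝ) T := hmemK.2
    have hglobal : ∀ x : ℝ, ∀ t ∈ Set.Icc (0:ℝ) T, v x₀ t₀ ≤ v x t := by
      intro x t htI
      rcases le_total |x| R with hle | hge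
      · exact hminK' (x, t) ⟨abs_le.mp hle, htI⟩
      · exact hneg.le.trans (hRout x hge t htI).le
    have ht₀pos : 0 < t₀ := by
      rcases ht₀mem.1.lt_or_eq with h | h
      · exact h
      · exfalso
        have h1 : v x₀ t₀ = z x₀ 0 + ε * Real.cosh (μ * x₀) := by
          rw [hv, ← h]; simp
        have h2 := mul_pos hε (Real.cosh_pos (μ * x₀))
        linarith [hinit x₀, hneg]
    have ht₀Ioc : t₀ ∈ Set.Ioc (0:ℝ) T := ⟨ht₀pos, ht₀mem.2⟩
    -- spatial derivatives of v at (x₀, t₀)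
    have hdg : ∀ y : ℝ, HasDerivAt (fun y => v y t₀)
        (zx y t₀ + ε * Real.exp (lam * t₀) * (Real.sinh (μ * y) * μ)) y := by
      intro y
      exact (hx y t₀ ht₀Ioc).add
        (((aux_hmul μ y).cosh).const_mul (ε * Real.exp (lam * t₀)))
    have hdg2 : HasDerivAt (fun y => zx y t₀ + ε * Real.exp (lam * t₀) * (Real.sinh (μ * y) * μ))
        (zxx x₀ t₀ + ε * Real.exp (lam * t₀) * (Real.cosh (μ * x₀) * μ * μ)) x₀ :=
      (hxx x₀ t₀ ht₀Ioc).add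
        ((((aux_hmul μ x₀).sinh).mul_const μ).const_mul (ε * Real.exp (lam * t₀)))
    have hgmin : ∀ y : ℝ, v x₀ t₀ ≤ v y t₀ := fun y => hglobal y t₀ ht₀mem
    have hgx0 : zx x₀ t₀ + ε * Real.exp (lam * t₀) * (Real.sinh (μ * x₀) * μ) = 0 := by
      have hloc : IsLocalMin (fun y => v y t₀) x₀ := Filter.Eventually.of_forall hgmin
      exact hloc.hasDerivAt_eq_zero (hdg x₀)
    have hgxx : 0 ≤ zxx x₀ t₀ + ε * Real.exp (lam * t₀) * (Real.cosh (μ * x₀) * μ * μ) :=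
      aux_second_deriv_nonneg_s12 _ _ _ _ hdg hdg2 hgmin
    -- time derivative of v at (x₀, t₀)
    have hdt' : HasDerivWithinAt (fun s => v x₀ s)
        (zt x₀ t₀ + ε * (Real.exp (lam * t₀) * lam) * Real.cosh (μ * x₀))
        (Set.Ioc 0 T) t₀ := by
      apply (ht x₀ t₀ ht₀Ioc).add
      exact ((((aux_hmul lam t₀).exp).const_mul ε).mul_const
        (Real.cosh (μ * x₀))).hasDerivWithinAt
    have hdt : zt x₀ t₀ + ε * (Real.exp (lam * t₀) * lam) * Real.cosh (μ * x₀) ≤ 0 :=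
      aux_deriv_nonpos _ T t₀ _ ht₀pos ht₀mem.2 hdt' (fun t htI => hglobal x₀ t htI)
    -- put everything together at the minimum point
    have hz0 := hineq x₀ t₀ ht₀Ioc
    have hS2M : (sigma t₀)^2 ≤ M := hMσ t₀ ht₀mem
    have hS2nn : (0:ℝ) ≤ (sigma t₀)^2 := sq_nonneg _
    have hBM : |b t₀| ≤ M := hMb t₀ ht₀mem
    have hSh : |Real.sinh (μ * x₀)| ≤ Real.cosh (μ * x₀) := aux_abs_sinh_le_cosh _
    have hE : (0:ℝ) < Real.exp (lam * t₀) := Real.exp_pos _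
    have hCh : (0:ℝ) < Real.cosh (μ * x₀) := Real.cosh_pos _
    set E := Real.exp (lam * t₀) with hEdef
    set Ch := Real.cosh (μ * x₀) with hChdef
    set Sh := Real.sinh (μ * x₀) with hShdef
    set S2 := (sigma t₀)^2 with hS2def
    set B := b t₀ with hBdef
    have hneg' : z x₀ t₀ + ε * E * Ch < 0 := hneg
    clear_value E Ch Sh S2 B
    -- bracket lower bound: the barrier is a strict supersolution
    have hBSh0 : |B * Sh| ≤ M * Ch := by
      rw [abs_mul]
      exact mul_le_mul hBM hSh (abs_nonneg _) hM0
    have hBSh : -(M * Ch) ≤ B * Sh ∧ B * Sh ≤ M * Ch := abs_le.mp hBSh0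
    have he1 : S2 * (E * (Ch * μ * μ)) ≤ M * (E * (Ch * μ * μ)) :=
      mul_le_mul_of_nonneg_right hS2M
        (mul_nonneg hE.le (mul_nonneg (mul_nonneg hCh.le hμ0.le) hμ0.le))
    have he2 : (B * Sh) * (E * μ) ≤ (M * Ch) * (E * μ) :=
      mul_le_mul_of_nonneg_right hBSh.2 (mul_nonneg hE.le hμ0.le)
    have he3 : (0:ℝ) ≤ rG * (E * Ch) := mul_nonneg hrG (mul_nonneg hE.le hCh.le)
    have hbr : E * Ch ≤ E * lam * Ch - (1/2) * S2 * (E * (Ch * μ * μ))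
        - B * (E * (Sh * μ)) + rG * (E * Ch) := by
      rw [hlamdef]
      linarith [he1, he2, he3]
    have hbr' := mul_le_mul_of_nonneg_left hbr hε.le
    have hεECh : (0:ℝ) < ε * (E * Ch) := mul_pos hε (mul_pos hE hCh)
    -- upper bound for the operator applied to v at the minimum
    have hXle : zt x₀ t₀ + ε * (E * lam) * Ch
        - (1/2) * S2 * (zxx x₀ t₀ + ε * E * (Ch * μ * μ))
        - B * (zx x₀ t₀ + ε * E * (Sh * μ))
        + rG * (z x₀ t₀ + ε * E * Ch) ≤ 0 := by
      have h1 : B * (zx x₀ t₀ + ε * E * (Sh * μ)) = 0 := by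
        rw [hgx0, mul_zero]
      have h2 : 0 ≤ (1/2) * S2 * (zxx x₀ t₀ + ε * E * (Ch * μ * μ)) :=
        mul_nonneg (mul_nonneg (by norm_num) hS2nn) hgxx
      have h3 : rG * (z x₀ t₀ + ε * E * Ch) ≤ 0 :=
        mul_nonpos_of_nonneg_of_nonpos hrG hneg'.le
      linarith [hdt, h1, h2, h3]
    -- lower bound: the operator applied to v is strictly positive
    linarith [hz0, hbr', hεECh, hXle]
  -- let ε → 0
  intro x₁ t₁ ht₁
  by_contra hzneg
  push_neg at hzneg
  set E₁ := Real.exp (lam * t₁)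
  set Ch₁ := Real.cosh (μ * x₁)
  have hE₁ : (0:ℝ) < E₁ := Real.exp_pos _
  have hCh₁ : (0:ℝ) < Ch₁ := Real.cosh_pos _
  set ε₀ : ℝ := -z x₁ t₁ / (2 * (E₁ * Ch₁)) with hε₀
  have hε₀pos : 0 < ε₀ := by
    rw [hε₀]
    exact div_pos (by linarith) (mul_pos two_pos (mul_pos hE₁ hCh₁))
  have hkey := key ε₀ hε₀pos x₁ t₁ ht₁
  have : ε₀ * E₁ * Ch₁ = -z x₁ t₁ / 2 := by
    rw [hε₀]; field_simp
  rw [this] at hkey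
  linarith

/-- Increasing monotone iteration step: if `u₀` is a supersolution (and `−u₀` a
subsolution) of the semilinear equation `𝔏v = G(v;x,t)`, `w_m` is a subsolution
with `−u₀ ≤ w_m ≤ u₀` and `w_m(·,0) = v₀`, and `w_{m+1}` solves the linear problem
`𝔏w_{m+1} = G(w_m;x,t)`, `w_{m+1}(·,0) = v₀`, then
`−u₀ ≤ w_m ≤ w_{m+1} ≤ u₀` on `ℝ × [0,T]` and `w_{m+1}` is again a subsolution. -/
theorem stmt_12 (T : ℝ) (hT : 0 < T) (sigma qS gammaS : ℝ → ℝ)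
    (hsigmac : ContinuousOn sigma (Set.Icc 0 T))
    (hsigmapos : ∀ t ∈ Set.Icc (0:ℝ) T, 0 < sigma t)
    (hqc : ContinuousOn qS (Set.Icc 0 T)) (hgc : ContinuousOn gammaS (Set.Icc 0 T))
    (rG : ℝ) (hrG : 0 ≤ rG)
    (G : ℝ → ℝ → ℝ → ℝ)
    (hGmono : ∀ x : ℝ, ∀ t ∈ Set.Icc (0:ℝ) T, ∀ v₁ v₂ : ℝ, v₁ ≤ v₂ → G v₁ x t ≤ G v₂ x t)
    (v0 : ℝ → ℝ)
    (u0 u0t u0x u0xx wm wmt wmx wmxx wm1 wm1t wm1x wm1xx : ℝ → ℝ → ℝ)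
    (C kappa : ℝ) (hC : 0 ≤ C) (hkappa : 0 ≤ kappa)
    (hreg0 : IsRegularParabolic T u0 u0t u0x u0xx C kappa)
    (hregm : IsRegularParabolic T wm wmt wmx wmxx C kappa)
    (hregm1 : IsRegularParabolic T wm1 wm1t wm1x wm1xx C kappa)
    -- (i) u₀ is a supersolution and −u₀ a subsolution, dominating the initial datum:
    (hu0sup : ∀ x : ℝ, ∀ t ∈ Set.Ioc (0:ℝ) T,
      Lop sigma qS gammaS rG u0 u0t u0x u0xx x t ≥ G (u0 x t) x t)
    (hu0sub : ∀ x : ℝ, ∀ t ∈ Set.Ioc (0:ℝ) T,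
      -Lop sigma qS gammaS rG u0 u0t u0x u0xx x t ≤ G (-u0 x t) x t)
    (hinit0 : ∀ x : ℝ, -u0 x 0 ≤ v0 x ∧ v0 x ≤ u0 x 0)
    -- (ii) w_{m+1} solves the linear problem with right-hand side G(w_m;x,t):
    (hm1eq : ∀ x : ℝ, ∀ t ∈ Set.Ioc (0:ℝ) T,
      Lop sigma qS gammaS rG wm1 wm1t wm1x wm1xx x t = G (wm x t) x t)
    (hm1init : ∀ x : ℝ, wm1 x 0 = v0 x)
    -- (iii) w_m is a subsolution squeezed between −u₀ and u₀:
    (hmbound : ∀ x : ℝ, ∀ t ∈ Set.Icc (0:ℝ) T, -u0 x t ≤ wm x t ∧ wm x t ≤ u0 x t)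
    (hminit : ∀ x : ℝ, wm x 0 = v0 x)
    (hmsub : ∀ x : ℝ, ∀ t ∈ Set.Ioc (0:ℝ) T,
      Lop sigma qS gammaS rG wm wmt wmx wmxx x t ≤ G (wm x t) x t) :
    (∀ x : ℝ, ∀ t ∈ Set.Icc (0:ℝ) T,
      -u0 x t ≤ wm x t ∧ wm x t ≤ wm1 x t ∧ wm1 x t ≤ u0 x t) ∧
    (∀ x : ℝ, ∀ t ∈ Set.Ioc (0:ℝ) T,
      Lop sigma qS gammaS rG wm1 wm1t wm1x wm1xx x t ≤ G (wm1 x t) x t) := by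
  set b : ℝ → ℝ := fun t => qS t - gammaS t - (1/2) * (sigma t)^2 with hbdef
  have hbc : ContinuousOn b (Set.Icc 0 T) :=
    (hqc.sub hgc).sub (continuousOn_const.mul (hsigmac.pow 2))
  -- w_m ≤ w_{m+1}
  have hcomp1 : ∀ x : ℝ, ∀ t ∈ Set.Icc (0:ℝ) T, 0 ≤ wm1 x t - wm x t := by
    refine comparison T hT sigma b hsigmac hbc rG hrG
      (fun x t => wm1 x t - wm x t) (fun x t => wm1t x t - wmt x t)
      (fun x t => wm1x x t - wmx x t) (fun x t => wm1xx x t - wmxx x t)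
      (2*C) kappa (by linarith) hkappa ?_ ?_ ?_ ?_ ?_ ?_ ?_
    · exact hregm1.cont.sub hregm.cont
    · exact fun x t htI => (hregm1.hasDeriv_t x t htI).sub (hregm.hasDeriv_t x t htI)
    · exact fun x t htI => (hregm1.hasDeriv_x x t htI).sub (hregm.hasDeriv_x x t htI)
    · exact fun x t htI => (hregm1.hasDeriv_xx x t htI).sub (hregm.hasDeriv_xx x t htI)
    · intro x t htI
      have h1 := abs_le.mp (hregm1.growth x t htI)
      have h2 := abs_le.mp (hregm.growth x t htI)
      beta_reduce
      rw [abs_le]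
      constructor <;> [linarith; linarith]
    · intro x t htI
      have h1 := hm1eq x t htI
      have h2 := hmsub x t htI
      simp only [Lop] at h1 h2
      beta_reduce
      simp only [hbdef]
      linarith
    · intro x
      simp [hm1init x, hminit x]
  -- w_{m+1} ≤ u₀
  have hcomp2 : ∀ x : ℝ, ∀ t ∈ Set.Icc (0:ℝ) T, 0 ≤ u0 x t - wm1 x t := by
    refine comparison T hT sigma b hsigmac hbc rG hrG
      (fun x t => u0 x t - wm1 x t) (fun x t => u0t x t - wm1t x t)
      (fun x t => u0x x t - wm1x x t) (fun x t => u0xx x t - wm1xx x t)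
      (2*C) kappa (by linarith) hkappa ?_ ?_ ?_ ?_ ?_ ?_ ?_
    · exact hreg0.cont.sub hregm1.cont
    · exact fun x t htI => (hreg0.hasDeriv_t x t htI).sub (hregm1.hasDeriv_t x t htI)
    · exact fun x t htI => (hreg0.hasDeriv_x x t htI).sub (hregm1.hasDeriv_x x t htI)
    · exact fun x t htI => (hreg0.hasDeriv_xx x t htI).sub (hregm1.hasDeriv_xx x t htI)
    · intro x t htI
      have h1 := abs_le.mp (hreg0.growth x t htI)
      have h2 := abs_le.mp (hregm1.growth x t htI)
      beta_reduce
      rw [abs_le]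
      constructor <;> [linarith; linarith]
    · intro x t htI
      have htIcc : t ∈ Set.Icc (0:ℝ) T := ⟨htI.1.le, htI.2⟩
      have h1 := hm1eq x t htI
      have h2 := hu0sup x t htI
      have h3 := hGmono x t htIcc (wm x t) (u0 x t) (hmbound x t htIcc).2
      simp only [Lop] at h1 h2
      beta_reduce
      simp only [hbdef]
      linarith
    · intro x
      have := (hinit0 x).2
      beta_reduce
      rw [hm1init x]
      linarith
  refine ⟨fun x t htI => ⟨(hmbound x t htI).1, by linarith [hcomp1 x t htI],
    by linarith [hcomp2 x t htI]⟩, ?_⟩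
  intro x t htI
  have htIcc : t ∈ Set.Icc (0:ℝ) T := ⟨htI.1.le, htI.2⟩
  rw [hm1eq x t htI]
  exact hGmono x t htIcc (wm x t) (wm1 x t) (by linarith [hcomp1 x t htIcc])
end
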